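/- arXiv:1604.00514 — 6 statements merged into one kernel-verified Lean document; each statement's English description precedes it below -/
import Mathlib

section
/- Let I' be a nontrivial closed subinterval of I = [0,1], let Q be a compact Hausdorff topological space, and let n ≥ 1 be an integer. Given a continuous map f : Q × I → ℂⁿ such that for every q ∈ Q the path f(q,·) is full on I' (i.e. the ℂ-linear span of f(q, I') equals ℂⁿ), there exist an integer N ≥ n and continuous functions g₁, …, g_N : I → ℂ, each vanishing identically on I \ I', such that, setting h(ζ,s) := ∏_{i=1}^N (1 + ζᵢ gᵢ(s)) for ζ = (ζ₁,…,ζ_N) ∈ ℂᴺ and s ∈ I, the derivative at ζ = 0 of the map ℂᴺ ∋ ζ ↦ ∫₀¹ h(ζ,s) f(q,s) ds ∈ ℂⁿ is a surjective ℂ-linear map ℂᴺ → ℂⁿ for every q ∈ Q. -/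
open MeasureTheory Set

lemma euc_sum_apply {α : Type*} (s : Finset α) {n : ℕ} (V : α → EuclideanSpace ℂ (Fin n)) (i : Fin n) :
    (∑ j ∈ s, V j) i = ∑ j ∈ s, (V j) i := by
  induction s using Finset.cons_induction with
  | empty => rfl
  | cons a s ha ih => rw [Finset.sum_cons, Finset.sum_cons, ← ih]; rfl

lemma aux_spanCols {n : ℕ} (M : Matrix (Fin n) (Fin n) ℂ) (hdet : M.det ≠ 0)
    (V : Fin n → EuclideanSpace ℂ (Fin n)) (hMV : ∀ i j, M i j = V j i) :
    Submodule.span ℂ (Set.range V) = ⊤ := by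
  rw [eq_top_iff]
  rintro x -
  have hu : IsUnit M.det := isUnit_iff_ne_zero.mpr hdet
  set y := M⁻¹.mulVec x with hy
  have hx : M.mulVec y = x := by
    rw [hy, Matrix.mulVec_mulVec, Matrix.mul_nonsing_inv _ hu, Matrix.one_mulVec]
  have hxsum : x = ∑ j, y j • V j := by
    ext i
    have h1 : (∑ j, y j • V j) i = ∑ j, y j * (V j) i := by
      rw [euc_sum_apply]; rfl
    rw [h1, ← hx]
    simp [Matrix.mulVec, dotProduct, hMV, mul_comm]
  rw [hxsum]
  exact Submodule.sum_mem _ fun j _ => Submodule.smul_mem _ _ (Submodule.subset_span (Set.mem_range_self j))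


lemma aux_coeff {N : ℕ} (i : Fin N) (T : Finset (Fin N)) :
    ∑ j ∈ T, (∏ k ∈ T.erase j, (0:ℂ)) * ((Pi.single i (1:ℂ) : Fin N → ℂ) j)
      = if T = {i} then 1 else 0 := by
  by_cases hi : i ∈ T
  · rw [Finset.sum_eq_single_of_mem i hi (fun j _ hji => by simp [Pi.single_eq_of_ne hji])]
    by_cases hT : T = {i}
    · simp [hT]
    · obtain ⟨k, hk⟩ : (T.erase i).Nonempty :=
        (Finset.erase_nonempty hi).mpr ((Finset.nontrivial_iff_ne_singleton hi).mpr hT)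
      rw [Finset.prod_eq_zero hk rfl]
      simp [hT]
  · rw [Finset.sum_eq_zero fun j hj => by
      have hji : j ≠ i := fun h => hi (h ▸ hj)
      simp [Pi.single_eq_of_ne hji]]
    have hT : T ≠ {i} := fun h => hi (h ▸ Finset.mem_singleton_self i)
    simp [hT]

lemma aux_deriv {N n : ℕ} (g : Fin N → ℝ → ℂ) (hg : ∀ i, ContinuousOn (g i) (Icc (0:ℝ) 1))
    (F : ℝ → EuclideanSpace ℂ (Fin n)) (hF : ContinuousOn F (Icc (0:ℝ) 1)) :
    ∃ D : (Fin N → ℂ) →L[ℂ] EuclideanSpace ℂ (Fin n),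
      HasFDerivAt (fun ζ : Fin N → ℂ => ∫ s in (0:ℝ)..1, (∏ i, (1 + ζ i * g i s)) • F s) D 0 ∧
      ∀ i, D (Pi.single i 1) = ∫ s in (0:ℝ)..1, g i s • F s := by
  have huIcc : uIcc (0:ℝ) 1 = Icc 0 1 := uIcc_of_le zero_le_one
  have hprod : ∀ T : Finset (Fin N), ContinuousOn (fun s => ∏ i ∈ T, g i s) (Icc (0:ℝ) 1) := by
    intro T
    induction T using Finset.cons_induction with
    | empty => simpa using continuousOn_const
    | cons a s ha ih => simp only [Finset.prod_cons]; exact (hg a).mul ih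
  have hInt : ∀ (T : Finset (Fin N)) (c : ℂ),
      IntervalIntegrable (fun s => c • ((∏ i ∈ T, g i s) • F s)) volume 0 1 := by
    intro T c
    apply ContinuousOn.intervalIntegrable
    rw [huIcc]
    exact (((hprod T).smul hF).const_smul c)
  set w : Finset (Fin N) → EuclideanSpace ℂ (Fin n) :=
    fun T => ∫ s in (0:ℝ)..1, (∏ i ∈ T, g i s) • F s with hw
  have hexp : ∀ ζ : Fin N → ℂ,
      (∫ s in (0:ℝ)..1, (∏ i, (1 + ζ i * g i s)) • F s)
        = ∑ T ∈ Finset.univ.powerset, (∏ i ∈ T, ζ i) • w T := by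
    intro ζ
    have hpt : ∀ s, (∏ i, (1 + ζ i * g i s)) • F s
        = ∑ T ∈ Finset.univ.powerset, (∏ i ∈ T, ζ i) • ((∏ i ∈ T, g i s) • F s) := by
      intro s
      have h1 : (∏ i, (1 + ζ i * g i s))
          = ∑ T ∈ Finset.univ.powerset, (∏ i ∈ T, ζ i) * ∏ i ∈ T, g i s := by
        have h2 : (∏ i, (1 + ζ i * g i s)) = ∏ i, (ζ i * g i s + 1) :=
          Finset.prod_congr rfl fun i _ => add_comm _ _
        rw [h2, Finset.prod_add]
        exact Finset.sum_congr rfl fun T _ => by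
          rw [Finset.prod_const_one, mul_one, Finset.prod_mul_distrib]
      rw [h1, Finset.sum_smul]
      exact Finset.sum_congr rfl fun T _ => mul_smul _ _ _
    simp_rw [hpt]
    rw [intervalIntegral.integral_finset_sum (fun T _ => hInt T (∏ i ∈ T, ζ i))]
    exact Finset.sum_congr rfl fun T _ => intervalIntegral.integral_smul _ _
  refine ⟨∑ T ∈ Finset.univ.powerset,
      (∑ j ∈ T, (∏ k ∈ T.erase j, (0:ℂ)) • ContinuousLinearMap.proj j).smulRight (w T), ?_, ?_⟩
  · have hfun : (fun ζ : Fin N → ℂ => ∫ s in (0:ℝ)..1, (∏ i, (1 + ζ i * g i s)) • F s)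
        = fun ζ => ∑ T ∈ Finset.univ.powerset, (∏ i ∈ T, ζ i) • w T := funext hexp
    rw [hfun]
    apply HasFDerivAt.fun_sum
    intro T _
    exact (HasFDerivAt.finset_prod fun i _ =>
      (ContinuousLinearMap.proj i : (Fin N → ℂ) →L[ℂ] ℂ).hasFDerivAt).smul_const (w T)
  · intro i
    rw [ContinuousLinearMap.sum_apply]
    have hcoeff : ∀ T : Finset (Fin N),
        ((∑ j ∈ T, (∏ k ∈ T.erase j, (0:ℂ)) • (ContinuousLinearMap.proj j : (Fin N → ℂ) →L[ℂ] ℂ)).smulRight (w T))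
          (Pi.single i (1:ℂ))
        = (if T = {i} then (1:ℂ) else 0) • w T := by
      intro T
      rw [ContinuousLinearMap.smulRight_apply, ← aux_coeff i T]
      congr 1
      rw [ContinuousLinearMap.sum_apply]
      exact Finset.sum_congr rfl fun j _ => by
        rw [ContinuousLinearMap.smul_apply, ContinuousLinearMap.proj_apply, smul_eq_mul]
    rw [Finset.sum_congr rfl fun T _ => hcoeff T]
    simp only [ite_smul, one_smul, zero_smul]
    rw [Finset.sum_ite_eq' Finset.univ.powerset ({i} : Finset (Fin N)) w]
    simp only [Finset.mem_powerset, Finset.subset_univ, if_true]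
    simp [hw, Finset.prod_singleton]


lemma aux_contInt {n : ℕ} {Q : Type} [TopologicalSpace Q]
    (fc : Q → ℝ → EuclideanSpace ℂ (Fin n))
    (hfc : Continuous fun p : Q × ℝ => fc p.1 p.2) (g : ℝ → ℂ) (hg : Continuous g) :
    Continuous fun q => ∫ s in (0:ℝ)..1, g s • fc q s := by
  set K := Icc (0:ℝ) 1 with hK
  have hmap : Continuous fun p : Q × K => (p.1, (p.2 : ℝ)) :=
    continuous_fst.prodMk (continuous_subtype_val.comp continuous_snd)
  have h2 : Continuous fun p : Q × K => fc p.1 (p.2 : ℝ) := hfc.comp hmap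
  have h1 : Continuous fun p : Q × K => g (p.2 : ℝ) :=
    hg.comp (continuous_subtype_val.comp continuous_snd)
  set Φ : C(Q × K, EuclideanSpace ℂ (Fin n)) := ⟨fun p => g p.2 • fc p.1 p.2, h1.smul h2⟩ with hΦ
  set Λ : C(K, EuclideanSpace ℂ (Fin n)) → EuclideanSpace ℂ (Fin n) :=
    fun u => ∫ s in (0:ℝ)..1, u (projIcc 0 1 zero_le_one s) with hΛdef
  have hint : ∀ u : C(K, EuclideanSpace ℂ (Fin n)),
      IntervalIntegrable (fun s => u (projIcc 0 1 zero_le_one s)) volume 0 1 :=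
    fun u => (u.continuous.comp continuous_projIcc).intervalIntegrable _ _
  have hΛ : LipschitzWith 1 Λ := by
    apply LipschitzWith.of_dist_le_mul
    intro u v
    rw [dist_eq_norm]
    have h1 : Λ u - Λ v
        = ∫ s in (0:ℝ)..1, (u (projIcc 0 1 zero_le_one s) - v (projIcc 0 1 zero_le_one s)) :=
      (intervalIntegral.integral_sub (hint u) (hint v)).symm
    rw [h1]
    have hb := intervalIntegral.norm_integral_le_of_norm_le_const (C := dist u v)
      (f := fun s => u (projIcc 0 1 zero_le_one s) - v (projIcc 0 1 zero_le_one s))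
      (a := 0) (b := 1) (fun s _ => by
        rw [← dist_eq_norm]
        exact ContinuousMap.dist_apply_le_dist _)
    simpa using hb
  have hcomp : (fun q => ∫ s in (0:ℝ)..1, g s • fc q s) = fun q => Λ (Φ.curry q) := by
    funext q
    rw [hΛdef]
    refine (intervalIntegral.integral_congr ?_).symm
    intro s hs
    rw [uIcc_of_le zero_le_one] at hs
    simp only [ContinuousMap.curry_apply]
    rw [projIcc_of_mem zero_le_one hs]
    rfl
  rw [hcomp]
  exact hΛ.continuous.comp Φ.curry.continuous

lemma aux_point {n : ℕ} (a b : ℝ) (ha : 0 ≤ a) (hab : a < b) (hb : b ≤ 1)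
    (F : ℝ → EuclideanSpace ℂ (Fin n)) (hF : Continuous F)
    (hfull : Submodule.span ℂ (F '' Icc a b) = ⊤) (x : EuclideanSpace ℂ (Fin n)) :
    ∃ c : C(ℝ, ℂ),
      ∫ s in (0:ℝ)..1, (((max 0 ((s - a)*(b - s)) : ℝ) : ℂ) * c s) • F s = x := by
  classical
  set bump : ℝ → ℝ := fun s => max 0 ((s - a)*(b - s)) with hbump
  have hbumpc : Continuous bump := continuous_const.max (by continuity)
  have hbumpnn : ∀ s, 0 ≤ bump s := fun s => le_max_left _ _
  have hbumppos : ∀ s ∈ Ioo a b, 0 < bump s := by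
    intro s hs
    exact lt_max_of_lt_right (mul_pos (by linarith [hs.1]) (by linarith [hs.2]))
  have hbump0 : ∀ s, s ∉ Ioo a b → bump s = 0 := by
    intro s hs
    rcases not_and_or.mp hs with h | h
    · push_neg at h
      exact max_eq_left (mul_nonpos_of_nonpos_of_nonneg (by linarith) (by linarith))
    · push_neg at h
      exact max_eq_left (mul_nonpos_of_nonneg_of_nonpos (by linarith) (by linarith))
  have hInt : ∀ c : C(ℝ, ℂ),
      IntervalIntegrable (fun s => (((bump s : ℝ) : ℂ) * c s) • F s) volume 0 1 := by
    intro c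
    exact (((Complex.continuous_ofReal.comp hbumpc).mul c.continuous).smul hF).intervalIntegrable _ _
  set Ψ : C(ℝ, ℂ) →ₗ[ℂ] EuclideanSpace ℂ (Fin n) :=
    { toFun := fun c => ∫ s in (0:ℝ)..1, (((bump s : ℝ) : ℂ) * c s) • F s
      map_add' := by
        intro c c'
        have : (fun s => (((bump s : ℝ) : ℂ) * (c + c') s) • F s)
            = fun s => (((bump s : ℝ) : ℂ) * c s) • F s + (((bump s : ℝ) : ℂ) * c' s) • F s := by
          funext s
          simp [mul_add, add_smul]
        rw [this, intervalIntegral.integral_add (hInt c) (hInt c')]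
      map_smul' := by
        intro r c
        have : (fun s => (((bump s : ℝ) : ℂ) * (r • c) s) • F s)
            = fun s => r • ((((bump s : ℝ) : ℂ) * c s) • F s) := by
          funext s
          simp [smul_smul, mul_left_comm]
        rw [this, intervalIntegral.integral_smul]
        rfl } with hΨ
  suffices hrange : LinearMap.range Ψ = ⊤ by
    obtain ⟨c, hc⟩ := LinearMap.range_eq_top.mp hrange x
    exact ⟨c, hc⟩
  by_contra hne
  have hKbot : (LinearMap.range Ψ)ᗮ ≠ ⊥ := by
    rw [Ne, Submodule.orthogonal_eq_bot_iff]
    exact hne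
  obtain ⟨v, hvK, hv0⟩ := (Submodule.ne_bot_iff _).mp hKbot
  have hperp : ∀ c : C(ℝ, ℂ), (inner ℂ v (Ψ c) : ℂ) = 0 :=
    fun c => (Submodule.mem_orthogonal' _ v).mp hvK _ (LinearMap.mem_range_self Ψ c)
  set w : ℝ → ℂ := fun s => (inner ℂ v (F s) : ℂ) with hwdef
  have hwc : Continuous w := Continuous.inner continuous_const hF
  have hswap : ∀ c : C(ℝ, ℂ),
      ∫ s in (0:ℝ)..1, (((bump s : ℝ) : ℂ) * c s) * w s = 0 := by
    intro c
    have h1 := (innerSL ℂ v).intervalIntegral_comp_comm (hInt c)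
    have h2 : (fun s => (innerSL ℂ v) ((((bump s : ℝ) : ℂ) * c s) • F s))
        = fun s => (((bump s : ℝ) : ℂ) * c s) * w s := by
      funext s
      simp [inner_smul_right, hwdef, mul_comm]
    rw [h2] at h1
    rw [h1]
    exact hperp c
  set c₀ : C(ℝ, ℂ) := ⟨fun s => (starRingEnd ℂ) (w s), RCLike.continuous_conj.comp hwc⟩ with hc₀
  set r : ℝ → ℝ := fun s => bump s * Complex.normSq (w s) with hr
  have hrint : ∫ s in (0:ℝ)..1, r s = 0 := by
    have h1 := hswap c₀
    have h2 : (fun s => (((bump s : ℝ) : ℂ) * c₀ s) * w s) = fun s => ((r s : ℝ) : ℂ) := by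
      funext s
      rw [hc₀]
      simp only [ContinuousMap.coe_mk]
      rw [mul_assoc]
      have hcm : (starRingEnd ℂ) (w s) * w s = ((Complex.normSq (w s) : ℝ) : ℂ) := by
        rw [mul_comm, Complex.mul_conj]
      rw [hcm, hr]
      dsimp only
      push_cast
      ring
    rw [h2] at h1
    rw [intervalIntegral.integral_ofReal] at h1
    exact_mod_cast h1
  have hrnn : ∀ s, 0 ≤ r s := fun s => mul_nonneg (hbumpnn s) (Complex.normSq_nonneg _)
  have hIoo : ∀ s ∈ Ioo a b, w s = 0 := by
    by_contra hcon
    push_neg at hcon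
    obtain ⟨s₀, hs₀, hw0⟩ := hcon
    have hrpos : 0 < r s₀ :=
      mul_pos (hbumppos s₀ hs₀) (Complex.normSq_pos.mpr hw0)
    have hrci : IntervalIntegrable r volume 0 1 :=
      (hbumpc.mul (Complex.continuous_normSq.comp hwc)).intervalIntegrable _ _
    have hiff := intervalIntegral.integral_pos_iff_support_of_nonneg_ae
      (Filter.Eventually.of_forall hrnn) hrci
    have hpos : 0 < ∫ s in (0:ℝ)..1, r s := by
      rw [hiff]
      refine ⟨zero_lt_one, ?_⟩
      have hU : IsOpen (r ⁻¹' (Ioi 0) ∩ Ioo a b) :=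
        ((isOpen_Ioi.preimage (hbumpc.mul (Complex.continuous_normSq.comp hwc)))).inter isOpen_Ioo
      have hUsub : r ⁻¹' (Ioi 0) ∩ Ioo a b ⊆ Function.support r ∩ Ioc 0 1 := by
        rintro y ⟨hy1, hy2⟩
        exact ⟨ne_of_gt hy1, ⟨lt_of_le_of_lt ha hy2.1, le_trans (le_of_lt hy2.2) hb⟩⟩
      refine lt_of_lt_of_le ?_ (measure_mono hUsub)
      exact hU.measure_pos volume ⟨s₀, ⟨hrpos, hs₀⟩⟩
    rw [hrint] at hpos
    exact lt_irrefl 0 hpos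
  have hIcc : ∀ s ∈ Icc a b, w s = 0 := by
    have heq : EqOn w 0 (Ioo a b) := fun s hs => hIoo s hs
    have hcl : EqOn w 0 (closure (Ioo a b)) := heq.closure hwc continuous_const
    intro s hs
    rw [← closure_Ioo hab.ne] at hs
    exact hcl hs
  have hker : Submodule.span ℂ (F '' Icc a b) ≤ LinearMap.ker (innerSL ℂ v : EuclideanSpace ℂ (Fin n) →ₗ[ℂ] ℂ) := by
    rw [Submodule.span_le]
    rintro u ⟨s, hs, rfl⟩
    simp only [SetLike.mem_coe, LinearMap.mem_ker]
    exact hIcc s hs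
  rw [hfull] at hker
  have : (inner ℂ v v : ℂ) = 0 := hker (Submodule.mem_top)
  exact hv0 (inner_self_eq_zero.mp this)

/-- Lemma 2.2 of the paper: period dominating multipliers on an interval.
`I' = [a,b]` is a nontrivial closed subinterval of `I = [0,1]`, `Q` is a compact Hausdorff
space, and `f : Q × I → ℂⁿ` is continuous with `f(q,·)` full on `I'` for every `q`. Then
there are `N ≥ n` continuous functions `g₁,…,g_N : I → ℂ` supported on `I'` such that the
derivative at `ζ = 0` of `ζ ↦ ∫₀¹ (∏ᵢ (1 + ζᵢ gᵢ(s))) f(q,s) ds` is surjective for all `q`. -/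
theorem stmt_0
    (a b : ℝ) (ha : 0 ≤ a) (hab : a < b) (hb : b ≤ 1)
    (Q : Type) [TopologicalSpace Q] [CompactSpace Q] [T2Space Q]
    (n : ℕ) (hn : 1 ≤ n)
    (f : Q → ℝ → EuclideanSpace ℂ (Fin n))
    (hf : ContinuousOn (fun p : Q × ℝ => f p.1 p.2) (univ ×ˢ Icc (0:ℝ) 1))
    (hfull : ∀ q : Q, Submodule.span ℂ (f q '' Icc a b) = ⊤) :
    ∃ N : ℕ, n ≤ N ∧ ∃ g : Fin N → ℝ → ℂ,
      (∀ i, ContinuousOn (g i) (Icc (0:ℝ) 1)) ∧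
      (∀ i, ∀ s ∈ Icc (0:ℝ) 1 \ Icc a b, g i s = 0) ∧
      (∀ q : Q, ∃ D : (Fin N → ℂ) →L[ℂ] EuclideanSpace ℂ (Fin n),
        HasFDerivAt
          (fun ζ : Fin N → ℂ =>
            ∫ s in (0:ℝ)..1, (∏ i, (1 + ζ i * g i s)) • f q s) D 0 ∧
        Function.Surjective D) := by
  classical
  set clamp : ℝ → ℝ := fun s => max 0 (min 1 s) with hclampdef
  have hclampc : Continuous clamp := continuous_const.max (continuous_const.min continuous_id)
  have hclampmem : ∀ s, clamp s ∈ Icc (0:ℝ) 1 :=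
    fun s => ⟨le_max_left _ _, max_le (by norm_num) (min_le_left _ _)⟩
  have hclampeq : ∀ s ∈ Icc (0:ℝ) 1, clamp s = s := by
    intro s hs
    rw [hclampdef]
    dsimp only
    rw [min_eq_right hs.2, max_eq_right hs.1]
  set fc : Q → ℝ → EuclideanSpace ℂ (Fin n) := fun q s => f q (clamp s) with hfcdef
  have hfcc : Continuous fun p : Q × ℝ => fc p.1 p.2 := by
    have h1 : Continuous fun p : Q × ℝ => (p.1, clamp p.2) :=
      continuous_fst.prodMk (hclampc.comp continuous_snd)
    exact hf.comp_continuous h1 (fun p => ⟨mem_univ _, hclampmem _⟩)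
  have hfceq : ∀ q, ∀ s ∈ Icc (0:ℝ) 1, fc q s = f q s := by
    intro q s hs
    rw [hfcdef]
    dsimp only
    rw [hclampeq s hs]
  have hfcq : ∀ q, Continuous (fc q) :=
    fun q => hfcc.comp (continuous_const.prodMk continuous_id)
  have hfq : ∀ q, ContinuousOn (f q) (Icc (0:ℝ) 1) :=
    fun q => ((hfcq q).continuousOn).congr (fun s hs => (hfceq q s hs).symm)
  have hfullc : ∀ q, Submodule.span ℂ (fc q '' Icc a b) = ⊤ := by
    intro q
    have himg : fc q '' Icc a b = f q '' Icc a b :=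
      image_congr fun s hs => hfceq q s ⟨le_trans ha hs.1, le_trans hs.2 hb⟩
    rw [himg]
    exact hfull q
  -- pointwise block construction
  have hpoint : ∀ q₀ : Q, ∃ G : Fin n → ℝ → ℂ,
      (∀ j, Continuous (G j)) ∧ (∀ j s, s ∉ Ioo a b → G j s = 0) ∧
      (∀ j, ∫ s in (0:ℝ)..1, G j s • fc q₀ s = EuclideanSpace.single j 1) := by
    intro q₀
    have hap := fun j : Fin n =>
      aux_point a b ha hab hb (fc q₀) (hfcq q₀) (hfullc q₀) (EuclideanSpace.single j 1)
    choose c hc using hap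
    refine ⟨fun j s => ((max 0 ((s - a)*(b - s)) : ℝ) : ℂ) * (c j) s, ?_, ?_, ?_⟩
    · intro j
      exact (Complex.continuous_ofReal.comp
        (continuous_const.max (by continuity))).mul (c j).continuous
    · intro j s hs
      have hb0 : (max 0 ((s - a)*(b - s)) : ℝ) = 0 := by
        rcases not_and_or.mp hs with h | h
        · push_neg at h
          exact max_eq_left (mul_nonpos_of_nonpos_of_nonneg (by linarith) (by linarith))
        · push_neg at h
          exact max_eq_left (mul_nonpos_of_nonneg_of_nonpos (by linarith) (by linarith))
      dsimp only
      rw [hb0]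
      simp
    · exact hc
  choose G hGc hGsupp hGint using hpoint
  set V : Q → Q → Fin n → EuclideanSpace ℂ (Fin n) :=
    fun q₀ q j => ∫ s in (0:ℝ)..1, G q₀ j s • fc q s with hVdef
  set M : Q → Q → Matrix (Fin n) (Fin n) ℂ := fun q₀ q => Matrix.of fun i j => V q₀ q j i with hMdef
  have hdetc : ∀ q₀, Continuous fun q => (M q₀ q).det := by
    intro q₀
    apply Continuous.matrix_det
    apply continuous_matrix
    intro i j
    exact (PiLp.proj (𝕜 := ℂ) (p := 2) (β := fun _ : Fin n => ℂ) i).continuous.comp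
      (aux_contInt fc hfcc (G q₀ j) (hGc q₀ j))
  have hMone : ∀ q₀, M q₀ q₀ = 1 := by
    intro q₀
    ext i j
    show (V q₀ q₀ j) i = _
    rw [hVdef]
    dsimp only
    rw [hGint q₀ j, EuclideanSpace.single_apply, Matrix.one_apply]
  set U : Q → Set Q := fun q₀ => {q | (M q₀ q).det ≠ 0} with hUdef
  have hUopen : ∀ q₀, IsOpen (U q₀) := fun q₀ => isOpen_compl_singleton.preimage (hdetc q₀)
  have hUmem : ∀ q₀, q₀ ∈ U q₀ := by
    intro q₀
    show (M q₀ q₀).det ≠ 0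
    rw [hMone q₀, Matrix.det_one]
    exact one_ne_zero
  obtain ⟨t, ht⟩ := IsCompact.elim_finite_subcover isCompact_univ U hUopen
    (fun q _ => mem_iUnion.mpr ⟨q, hUmem q⟩)
  set ι := (Fin n) ⊕ ({q₀ // q₀ ∈ t} × Fin n) with hι
  set N : ℕ := Fintype.card ι with hN
  have hNn : n ≤ N := by
    rw [hN]
    calc n = Fintype.card (Fin n) := (Fintype.card_fin n).symm
    _ ≤ Fintype.card ι := Fintype.card_le_of_injective Sum.inl Sum.inl_injective
  set e : ι ≃ Fin N := Fintype.equivFin ι with he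
  set gbig : ι → ℝ → ℂ := Sum.elim (fun _ _ => 0) (fun p s => G p.1.1 p.2 s) with hgbig
  set g : Fin N → ℝ → ℂ := fun i => gbig (e.symm i) with hg
  have hgcont : ∀ i : Fin N, Continuous (g i) := by
    intro i
    rw [hg]
    dsimp only
    rcases e.symm i with j | p
    · exact continuous_const
    · exact hGc p.1.1 p.2
  have hgsupp : ∀ i : Fin N, ∀ s, s ∉ Ioo a b → g i s = 0 := by
    intro i s hs
    rw [hg]
    dsimp only
    rcases e.symm i with j | p
    · rfl
    · exact hGsupp p.1.1 p.2 s hs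
  refine ⟨N, hNn, g, fun i => (hgcont i).continuousOn, ?_, ?_⟩
  · intro i s hs
    exact hgsupp i s (fun hIoo => hs.2 ⟨le_of_lt hIoo.1, le_of_lt hIoo.2⟩)
  · intro q
    obtain ⟨D, hD, hDsingle⟩ := aux_deriv g (fun i => (hgcont i).continuousOn) (f q) (hfq q)
    refine ⟨D, hD, ?_⟩
    have hspan : Submodule.span ℂ
        (Set.range fun i : Fin N => ∫ s in (0:ℝ)..1, g i s • f q s) = ⊤ := by
      obtain ⟨q₀, hq₀t, hq₀U⟩ : ∃ q₀ ∈ t, q ∈ U q₀ := by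
        have h1 := ht (mem_univ q)
        rw [mem_iUnion₂] at h1
        obtain ⟨q₀, h2, h3⟩ := h1
        exact ⟨q₀, h2, h3⟩
      have hcol := aux_spanCols (M q₀ q) hq₀U (fun j => V q₀ q j) (fun i j => rfl)
      rw [eq_top_iff, ← hcol]
      apply Submodule.span_le.mpr
      rintro x ⟨j, rfl⟩
      apply Submodule.subset_span
      refine ⟨e (Sum.inr ⟨⟨q₀, hq₀t⟩, j⟩), ?_⟩
      have hgi : g (e (Sum.inr ⟨⟨q₀, hq₀t⟩, j⟩)) = G q₀ j := by
        rw [hg]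
        dsimp only
        rw [Equiv.symm_apply_apply]
        rfl
      show (∫ s in (0:ℝ)..1, g (e (Sum.inr ⟨⟨q₀, hq₀t⟩, j⟩)) s • f q s)
          = ∫ s in (0:ℝ)..1, G q₀ j s • fc q s
      rw [hgi]
      refine intervalIntegral.integral_congr ?_
      intro s hs
      rw [uIcc_of_le zero_le_one] at hs
      show G q₀ j s • f q s = G q₀ j s • fc q s
      rw [hfceq q s hs]
    intro x
    have hle : Submodule.span ℂ
        (Set.range fun i : Fin N => ∫ s in (0:ℝ)..1, g i s • f q s)
        ≤ LinearMap.range (D : (Fin N → ℂ) →ₗ[ℂ] EuclideanSpace ℂ (Fin n)) := by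
      apply Submodule.span_le.mpr
      rintro y ⟨i, rfl⟩
      exact ⟨Pi.single i 1, hDsingle i⟩
    have hx : x ∈ Submodule.span ℂ
        (Set.range fun i : Fin N => ∫ s in (0:ℝ)..1, g i s • f q s) := by
      rw [hspan]
      exact Submodule.mem_top
    obtain ⟨ζ, hζ⟩ := hle hx
    exact ⟨ζ, hζ⟩
end

section
/- Let I' be a nontrivial closed subinterval of I = [0,1], let Q be a compact Hausdorff topological space, and let n ≥ 1 be an integer. If f : Q × I → ℂⁿ is continuous and for every q ∈ Q the ℂ-linear span of f(q, I') equals ℂⁿ, then there exist an integer N ≥ n and points s₁ < s₂ < ⋯ < s_N lying in the interior of I' such that the ℂ-linear span of {f(q,s₁), …, f(q,s_N)} equals ℂⁿ for every q ∈ Q. -/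
open MeasureTheory Set

private lemma stmt1_span_of_indep {n : ℕ} {f : ℝ → EuclideanSpace ℂ (Fin n)} {S : Set ℝ}
    {w : Fin n → ℝ} (hw : ∀ i, w i ∈ S)
    (hind : LinearIndependent ℂ fun i => f (w i)) :
    Submodule.span ℂ (f '' S) = ⊤ := by
  have hcard : Fintype.card (Fin n) = Module.finrank ℂ (EuclideanSpace ℂ (Fin n)) := by
    simp [finrank_euclideanSpace_fin]
  refine top_unique ?_
  rw [← hind.span_eq_top_of_card_eq_finrank' hcard]
  refine Submodule.span_mono ?_
  rintro _ ⟨i, rfl⟩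
  exact ⟨w i, hw i, rfl⟩

private lemma stmt1_indep_of_span {n : ℕ} {f : ℝ → EuclideanSpace ℂ (Fin n)} {S : Set ℝ}
    (hspan : Submodule.span ℂ (f '' S) = ⊤) :
    ∃ w : Fin n → ℝ, (∀ i, w i ∈ S) ∧ LinearIndependent ℂ fun i => f (w i) := by
  classical
  obtain ⟨t, hts, htspan, htind⟩ := exists_linearIndependent ℂ (f '' S)
  have htfin : t.Finite := htind.set_finite_of_isNoetherian
  haveI := htfin.fintype
  have hcardt : Fintype.card t = n := by
    have h1 : Module.finrank ℂ (Submodule.span ℂ t) = t.toFinset.card :=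
      finrank_span_set_eq_card htind
    rw [htspan, hspan] at h1
    rw [← Set.toFinset_card, ← h1, finrank_top, finrank_euclideanSpace_fin]
  obtain ⟨e⟩ : Nonempty (Fin n ≃ t) := ⟨(Fintype.equivFinOfCardEq hcardt).symm⟩
  choose x hxS hxe using fun i : Fin n =>
    (hts (e i).2 : ((e i : EuclideanSpace ℂ (Fin n))) ∈ f '' S)
  refine ⟨x, hxS, ?_⟩
  have hx : (fun i => f (x i)) = fun i => ((e i : EuclideanSpace ℂ (Fin n))) :=
    funext fun i => hxe i
  rw [hx]
  exact htind.comp e e.injective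

/-- if `f : Q × I → ℂⁿ` is continuous and `f(q,·)` is full on the
nontrivial closed subinterval `I' = [a,b] ⊆ [0,1]` for every `q` in a compact Hausdorff
space `Q`, then there are `N ≥ n` points `s₁ < ⋯ < s_N` in the interior of `I'` with
`span{f(q,s₁),…,f(q,s_N)} = ℂⁿ` for all `q`. -/
theorem stmt_1
    (a b : ℝ) (ha : 0 ≤ a) (hab : a < b) (hb : b ≤ 1)
    (Q : Type) [TopologicalSpace Q] [CompactSpace Q] [T2Space Q]
    (n : ℕ) (hn : 1 ≤ n)
    (f : Q → ℝ → EuclideanSpace ℂ (Fin n))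
    (hf : ContinuousOn (fun p : Q × ℝ => f p.1 p.2) (univ ×ˢ Icc (0:ℝ) 1))
    (hfull : ∀ q : Q, Submodule.span ℂ (f q '' Icc a b) = ⊤) :
    ∃ N : ℕ, n ≤ N ∧ ∃ s : Fin N → ℝ, StrictMono s ∧
      (∀ i, s i ∈ Ioo a b) ∧
      ∀ q : Q, Submodule.span ℂ (Set.range fun i => f q (s i)) = ⊤ := by
  classical
  have hIcc : Icc a b ⊆ Icc (0:ℝ) 1 := Icc_subset_Icc ha hb
  have hIoosub : Ioo a b ⊆ Icc (0:ℝ) 1 := Ioo_subset_Icc_self.trans hIcc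
  -- continuity in `q` for fixed time
  have hcont : ∀ x ∈ Icc (0:ℝ) 1, Continuous fun q : Q => f q x := by
    intro x hx
    rw [← continuousOn_univ]
    exact hf.comp ((continuous_id.prodMk continuous_const).continuousOn)
      (fun q _ => ⟨mem_univ _, hx⟩)
  -- fullness already on the open interval
  have hIoo : ∀ q : Q, Submodule.span ℂ (f q '' Ioo a b) = ⊤ := by
    intro q
    set S := Submodule.span ℂ (f q '' Ioo a b) with hS
    have hSclosed : IsClosed (S : Set (EuclideanSpace ℂ (Fin n))) :=
      Submodule.closed_of_finiteDimensional S
    have h1 : ContinuousOn (f q) (Icc a b) := by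
      have h0 : ContinuousOn ((fun p : Q × ℝ => f p.1 p.2) ∘ (fun x : ℝ => ((q, x) : Q × ℝ)))
          (Icc a b) :=
        hf.comp (continuous_const.prodMk continuous_id).continuousOn
          (fun x hx => ⟨mem_univ _, hIcc hx⟩)
      exact h0
    have hsub : f q '' Icc a b ⊆ closure (f q '' Ioo a b) := by
      have := (closure_Ioo hab.ne : closure (Ioo a b) = Icc a b)
      rw [← this] at h1 ⊢
      exact h1.image_closure
    have h2 : closure (f q '' Ioo a b) ⊆ (S : Set (EuclideanSpace ℂ (Fin n))) :=
      closure_minimal Submodule.subset_span hSclosed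
    refine top_unique ?_
    rw [← hfull q]
    exact Submodule.span_le.mpr fun y hy => h2 (hsub hy)
  -- choose witnesses
  choose w hwmem hwind using fun q : Q => stmt1_indep_of_span (hIoo q)
  set F : Q → Finset ℝ := fun q => Finset.image (w q) Finset.univ with hF
  have hmemF : ∀ q, ↑(F q) ⊆ Ioo a b := by
    intro q x hx
    simp only [hF, Finset.coe_image, Finset.coe_univ, image_univ, mem_range] at hx
    obtain ⟨i, rfl⟩ := hx
    exact hwmem q i
  -- the good sets are open
  set U : Finset ℝ → Set Q := fun G =>
    {q | ∃ v : Fin n → ℝ, (∀ i, v i ∈ G) ∧ LinearIndependent ℂ fun i => f q (v i)} with hU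
  have hUopen : ∀ G : Finset ℝ, ↑G ⊆ Icc (0:ℝ) 1 → IsOpen (U G) := by
    intro G hG
    have heq : U G = ⋃ v : Fin n → G,
        (fun q : Q => fun i : Fin n => f q (v i)) ⁻¹' {g | LinearIndependent ℂ g} := by
      ext q
      simp only [hU, mem_iUnion, mem_preimage, mem_setOf_eq]
      constructor
      · rintro ⟨v, hv, hind⟩
        exact ⟨fun i => ⟨v i, hv i⟩, hind⟩
      · rintro ⟨v, hind⟩
        exact ⟨fun i => (v i : ℝ), fun i => (v i).2, hind⟩
    rw [heq]
    exact isOpen_iUnion fun v => isOpen_setOf_linearIndependent.preimage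
      (continuous_pi fun i => hcont _ (hG (v i).2))
  -- compactness : finite subcover
  obtain ⟨T, hT⟩ := isCompact_univ.elim_finite_subcover (fun q => U (F q))
      (fun q => hUopen (F q) ((hmemF q).trans hIoosub))
      (fun q _ => mem_iUnion.2 ⟨q, w q, fun i => Finset.mem_image_of_mem _ (Finset.mem_univ i),
        hwind q⟩)
  -- padding points to ensure `n ≤ N`
  set g : Fin n → ℝ := fun i => a + (b - a) * (((i : ℕ) + 1) / (n + 1)) with hg
  have hba : (0:ℝ) < b - a := sub_pos.2 hab
  have hn1 : (0:ℝ) < (n:ℝ) + 1 := by positivity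
  have hgmem : ∀ i, g i ∈ Ioo a b := by
    intro i
    have h1 : (0:ℝ) < ((i:ℕ) + 1 : ℝ) := by positivity
    have h2 : ((i:ℕ) + 1 : ℝ) < (n:ℝ) + 1 := by
      have : (i:ℕ) < n := i.2
      exact_mod_cast Nat.succ_lt_succ this
    constructor
    · have : (0:ℝ) < (b - a) * (((i:ℕ) + 1) / (n + 1)) := by positivity
      simp only [hg]; linarith
    · have hlt : (((i:ℕ) + 1 : ℝ)) / ((n:ℝ) + 1) < 1 := (div_lt_one hn1).2 h2
      have : (b - a) * ((((i:ℕ) + 1 : ℝ)) / ((n:ℝ) + 1)) < (b - a) * 1 := by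
        exact mul_lt_mul_of_pos_left hlt hba
      simp only [hg]; linarith
  have hgmono : StrictMono g := by
    intro i j hij
    have h2 : ((i:ℕ) + 1 : ℝ) < ((j:ℕ) + 1 : ℝ) := by exact_mod_cast Nat.succ_lt_succ hij
    have h3 : (((i:ℕ) + 1 : ℝ)) / ((n:ℝ) + 1) < (((j:ℕ) + 1 : ℝ)) / ((n:ℝ) + 1) :=
      (div_lt_div_iff_of_pos_right hn1).2 h2
    have h4 := mul_lt_mul_of_pos_left h3 hba
    simp only [hg]
    linarith
  set P : Finset ℝ := Finset.image g Finset.univ with hP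
  set F₀ : Finset ℝ := T.sup F ∪ P with hF₀
  have hF₀mem : ∀ x ∈ F₀, x ∈ Ioo a b := by
    intro x hx
    rcases Finset.mem_union.1 hx with hx | hx
    · obtain ⟨q, _, hxq⟩ := Finset.mem_sup.1 hx
      exact hmemF q hxq
    · obtain ⟨i, _, rfl⟩ := Finset.mem_image.1 hx
      exact hgmem i
  have hcardP : P.card = n := by
    rw [hP, Finset.card_image_of_injective _ hgmono.injective, Finset.card_univ, Fintype.card_fin]
  have hNle : n ≤ F₀.card := by
    rw [← hcardP]
    exact Finset.card_le_card (Finset.subset_union_right)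
  refine ⟨F₀.card, hNle, fun i => F₀.orderEmbOfFin rfl i, (F₀.orderEmbOfFin rfl).strictMono,
    fun i => hF₀mem _ (Finset.orderEmbOfFin_mem _ _ _), ?_⟩
  intro q
  have hrange : (Set.range fun i => f q (F₀.orderEmbOfFin rfl i)) = f q '' ↑F₀ := by
    rw [show (fun i => f q (F₀.orderEmbOfFin rfl i)) = f q ∘ (F₀.orderEmbOfFin rfl) from rfl,
      Set.range_comp, Finset.range_orderEmbOfFin]
  rw [hrange]
  obtain ⟨q', hq'T, hqU⟩ := mem_iUnion₂.1 (hT (mem_univ q))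
  obtain ⟨v, hv, hind⟩ := hqU
  refine stmt1_span_of_indep (w := v) ?_ hind
  intro i
  exact Finset.mem_coe.2 (Finset.mem_union_left _ (Finset.mem_sup.2 ⟨q', hq'T, hv i⟩))
end

section
/- Let n ≥ 1 and let f : [0,1] × [0,1] → ℂⁿ be a continuous map such that for every t ∈ [0,1] the path f_t := f(t,·) : [0,1] → ℂⁿ is nowhere flat. Then there exist an integer N ≥ n and a partition 0 = s₀ < s₁ < ⋯ < s_N = 1 of [0,1] such that for every t ∈ [0,1] the vectors V_j(t) := ∫_{s_{j-1}}^{s_j} f(t,s) ds, j = 1, …, N, span ℂⁿ over ℂ. -/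
open MeasureTheory Set

/-- A path `f : [0,1] → ℂⁿ` is *nowhere flat* if for every proper affine complex subspace
`Σ ⊊ ℂⁿ` the set `{s ∈ [0,1] : f(s) ∈ Σ}` is nowhere dense in `[0,1]` (with its subspace
topology). -/
def NowhereFlat {n : ℕ} (f : ℝ → EuclideanSpace ℂ (Fin n)) : Prop :=
  ∀ T : AffineSubspace ℂ (EuclideanSpace ℂ (Fin n)), T ≠ ⊤ →
    IsNowhereDense {s : Icc (0:ℝ) 1 | f ↑s ∈ T}

section helpers

private lemma nf_exists_point {n : ℕ} {g : ℝ → EuclideanSpace ℂ (Fin n)}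
    (hg : NowhereFlat g) (W : Submodule ℂ (EuclideanSpace ℂ (Fin n))) (hW : W ≠ ⊤)
    {a : ℝ} (ha0 : 0 ≤ a) (ha1 : a < 1) :
    ∃ x : ℝ, x ∈ Ioo a 1 ∧ g x ∉ W := by
  have hT : W.toAffineSubspace ≠ ⊤ := by
    intro h
    apply hW
    rw [Submodule.eq_top_iff']
    intro x
    rw [← Submodule.mem_toAffineSubspace, h]
    exact AffineSubspace.mem_top _ _ _
  have hnd := hg W.toAffineSubspace hT
  set U : Set (Icc (0:ℝ) 1) := (fun x : Icc (0:ℝ) 1 => (x:ℝ)) ⁻¹' (Ioo a 1) with hU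
  have hUopen : IsOpen U := isOpen_Ioo.preimage continuous_subtype_val
  have hUne : U.Nonempty := by
    refine ⟨⟨(a+1)/2, by constructor <;> [linarith; linarith]⟩, ?_⟩
    simp only [hU, mem_preimage, mem_Ioo]
    constructor <;> linarith
  rcases hUne with ⟨x0, hx0⟩
  by_cases hsub : U ⊆ closure {s : Icc (0:ℝ) 1 | g ↑s ∈ W.toAffineSubspace}
  · exfalso
    have : x0 ∈ interior (closure {s : Icc (0:ℝ) 1 | g ↑s ∈ W.toAffineSubspace}) :=
      interior_maximal hsub hUopen hx0
    rw [hnd] at this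
    exact this
  · rw [not_subset] at hsub
    rcases hsub with ⟨x, hxU, hxc⟩
    refine ⟨(x : ℝ), hxU, fun hmem => hxc (subset_closure ?_)⟩
    simpa [Submodule.mem_toAffineSubspace] using hmem

private lemma nf_exists_points {n : ℕ} {g : ℝ → EuclideanSpace ℂ (Fin n)}
    (hg : NowhereFlat g) :
    ∀ k : ℕ, k ≤ n → ∃ s : Fin k → ℝ, StrictMono s ∧ (∀ i, s i ∈ Ioo (0:ℝ) 1) ∧
      LinearIndependent ℂ fun i => g (s i) := by
  intro k
  induction k with
  | zero =>
    intro _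
    exact ⟨Fin.elim0, fun a => a.elim0, fun i => i.elim0, linearIndependent_empty_type⟩
  | succ k ih =>
    intro hk1
    obtain ⟨s, hmono, hmem, hli⟩ := ih (Nat.le_of_succ_le hk1)
    set W := Submodule.span ℂ (Set.range fun i => g (s i)) with hWdef
    have hW : W ≠ ⊤ := by
      intro h
      have := finrank_le_of_span_eq_top h
      rw [finrank_euclideanSpace_fin] at this
      simp only [Fintype.card_fin] at this
      omega
    set F : Finset ℝ := insert 0 (Finset.image s Finset.univ) with hF
    have hFne : F.Nonempty := Finset.insert_nonempty _ _
    set a : ℝ := F.max' hFne with ha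
    have ha0 : 0 ≤ a := Finset.le_max' _ 0 (Finset.mem_insert_self _ _)
    have hub : ∀ i, s i ≤ a := fun i =>
      Finset.le_max' _ _ (Finset.mem_insert_of_mem (Finset.mem_image_of_mem s (Finset.mem_univ i)))
    have ha1 : a < 1 := by
      rw [ha, Finset.max'_lt_iff]
      intro b hb
      rcases Finset.mem_insert.1 hb with h | h
      · rw [h]; exact zero_lt_one
      · rcases Finset.mem_image.1 h with ⟨i, _, rfl⟩
        exact (hmem i).2
    obtain ⟨x, hx, hxW⟩ := nf_exists_point hg W hW ha0 ha1
    have hlt : ∀ i, s i < x := fun i => lt_of_le_of_lt (hub i) hx.1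
    refine ⟨Fin.snoc s x, ?_, ?_, ?_⟩
    · intro i j hij
      induction j using Fin.lastCases with
      | last =>
        have hi : i ≠ Fin.last k := Fin.ne_last_of_lt hij
        obtain ⟨i', rfl⟩ := Fin.exists_castSucc_eq.2 hi
        simp only [Fin.snoc_castSucc, Fin.snoc_last]
        exact hlt i'
      | cast j' =>
        have hi : i ≠ Fin.last k := Fin.ne_last_of_lt (hij.trans (Fin.castSucc_lt_last j'))
        obtain ⟨i', rfl⟩ := Fin.exists_castSucc_eq.2 hi
        simp only [Fin.snoc_castSucc]
        exact hmono (by exact_mod_cast hij)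
    · intro i
      induction i using Fin.lastCases with
      | last =>
        simp only [Fin.snoc_last]
        exact ⟨lt_of_le_of_lt ha0 hx.1, hx.2⟩
      | cast i' =>
        simp only [Fin.snoc_castSucc]
        exact hmem i'
    · have h1 : LinearIndependent ℂ (g ∘ (Fin.snoc s x : Fin (k+1) → ℝ)) := by
        rw [Fin.comp_snoc, linearIndependent_fin_snoc]
        exact ⟨hli, hxW⟩
      exact h1


end helpers

section helpers2

variable {n : ℕ} {f : ℝ → ℝ → EuclideanSpace ℂ (Fin n)}

private lemma cont_slice (hf : ContinuousOn (fun p : ℝ × ℝ => f p.1 p.2) (Icc 0 1 ×ˢ Icc 0 1))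
    {t : ℝ} (ht : t ∈ Icc (0:ℝ) 1) : ContinuousOn (f t) (Icc 0 1) := by
  have : ContinuousOn (fun u : ℝ => (t, u)) (Icc 0 1) :=
    (continuous_const.prodMk continuous_id).continuousOn
  exact hf.comp this (fun u hu => ⟨ht, hu⟩)

private lemma uIcc_sub {a b : ℝ} (ha : a ∈ Icc (0:ℝ) 1) (hb : b ∈ Icc (0:ℝ) 1) :
    uIcc a b ⊆ Icc (0:ℝ) 1 := by
  have h01 : uIcc (0:ℝ) 1 = Icc (0:ℝ) 1 := uIcc_of_le (zero_le_one' ℝ)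
  have := uIcc_subset_uIcc (a₁ := a) (b₁ := b) (a₂ := (0:ℝ)) (b₂ := 1)
    (by rwa [h01]) (by rwa [h01])
  rwa [h01] at this

private lemma int_integrable (hf : ContinuousOn (fun p : ℝ × ℝ => f p.1 p.2) (Icc 0 1 ×ˢ Icc 0 1))
    {t a b : ℝ} (ht : t ∈ Icc (0:ℝ) 1) (ha : a ∈ Icc (0:ℝ) 1) (hb : b ∈ Icc (0:ℝ) 1) :
    IntervalIntegrable (f t) volume a b :=
  ContinuousOn.intervalIntegrable ((cont_slice hf ht).mono (uIcc_sub ha hb))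

private lemma cont_integral (hf : ContinuousOn (fun p : ℝ × ℝ => f p.1 p.2) (Icc 0 1 ×ˢ Icc 0 1))
    {a b : ℝ} (ha : a ∈ Icc (0:ℝ) 1) (hb : b ∈ Icc (0:ℝ) 1) :
    ContinuousOn (fun t => ∫ u in a..b, f t u) (Icc 0 1) := by
  have hK : IsCompact (Icc (0:ℝ) 1 ×ˢ Icc (0:ℝ) 1) := isCompact_Icc.prod isCompact_Icc
  have hu := hK.uniformContinuousOn_of_continuous hf
  rw [Metric.uniformContinuousOn_iff] at hu
  rw [Metric.continuousOn_iff]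
  intro t₀ ht₀ ε hε
  obtain ⟨δ, hδ, hδ'⟩ := hu (ε/2) (by linarith)
  refine ⟨δ, hδ, fun t ht htd => ?_⟩
  have hbound : ∀ u ∈ uIoc a b, ‖f t u - f t₀ u‖ ≤ ε/2 := by
    intro u hu'
    have humem : u ∈ Icc (0:ℝ) 1 := uIcc_sub ha hb (uIoc_subset_uIcc hu')
    have hdlt : dist (t, u) (t₀, u) < δ := by
      calc dist (t, u) (t₀, u) = max (dist t t₀) 0 := by rw [Prod.dist_eq, dist_self]
        _ = dist t t₀ := max_eq_left dist_nonneg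
        _ < δ := htd
    have := hδ' (t, u) ⟨ht, humem⟩ (t₀, u) ⟨ht₀, humem⟩ hdlt
    rw [dist_eq_norm] at this
    exact this.le
  have habs : |b - a| ≤ 1 := by
    rcases ha with ⟨ha0, ha1⟩; rcases hb with ⟨hb0, hb1⟩
    rw [abs_le]; constructor <;> linarith
  have hsub : (∫ u in a..b, f t u) - (∫ u in a..b, f t₀ u) = ∫ u in a..b, (f t u - f t₀ u) :=
    (intervalIntegral.integral_sub (int_integrable hf ht ha hb) (int_integrable hf ht₀ ha hb)).symm
  rw [dist_eq_norm, hsub]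
  calc ‖∫ u in a..b, (f t u - f t₀ u)‖ ≤ ε/2 * |b - a| :=
        intervalIntegral.norm_integral_le_of_norm_le_const hbound
    _ ≤ ε/2 * 1 := by
        apply mul_le_mul_of_nonneg_left habs (by linarith)
    _ < ε := by linarith

private lemma local_data (hn : 1 ≤ n)
    (hf : ContinuousOn (fun p : ℝ × ℝ => f p.1 p.2) (Icc 0 1 ×ˢ Icc 0 1))
    {t₀ : ℝ} (ht₀ : t₀ ∈ Icc (0:ℝ) 1) (hfl : NowhereFlat (f t₀)) :
    ∃ c d : Fin n → ℝ,
      (∀ i, c i ∈ Icc (0:ℝ) 1 ∧ d i ∈ Icc (0:ℝ) 1 ∧ c i ≤ d i) ∧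
      ∃ V : Set ℝ, IsOpen V ∧ t₀ ∈ V ∧ ∀ t ∈ V ∩ Icc (0:ℝ) 1,
        LinearIndependent ℂ fun i => ∫ u in (c i)..(d i), f t u := by
  haveI : Nonempty (Fin n) := Fin.pos_iff_nonempty.1 hn
  obtain ⟨s, hmono, hmem, hli⟩ := nf_exists_points hfl n le_rfl
  have hopen := isOpen_setOf_linearIndependent (𝕜 := ℂ) (E := EuclideanSpace ℂ (Fin n)) (ι := Fin n)
  rw [Metric.isOpen_iff] at hopen
  obtain ⟨ε, hε, hball⟩ := hopen _ hli
  have hcont : ∀ i, ContinuousAt (f t₀) (s i) := fun i =>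
    (cont_slice hf ht₀).continuousAt (Icc_mem_nhds (hmem i).1 (hmem i).2)
  have hη : ∀ i, ∃ η, 0 < η ∧ ∀ u : ℝ, dist u (s i) < η → dist (f t₀ u) (f t₀ (s i)) < ε/2 := by
    intro i
    obtain ⟨η, hη1, hη2⟩ := Metric.continuousAt_iff.1 (hcont i) (ε/2) (by linarith)
    exact ⟨η, hη1, fun u hu => hη2 hu⟩
  choose η hηpos hηlt using hη
  set δ : ℝ := Finset.univ.inf' Finset.univ_nonempty
      (fun i => min (η i / 2) (min (s i) (1 - s i))) with hδdef
  have hδpos : 0 < δ := by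
    rw [hδdef, Finset.lt_inf'_iff]
    intro i _
    have h1 := hηpos i
    have h2 := (hmem i).1
    have h3 := (hmem i).2
    simp only [lt_min_iff]
    exact ⟨by linarith, by linarith, by linarith⟩
  have hδle : ∀ i, δ ≤ min (η i / 2) (min (s i) (1 - s i)) := fun i =>
    Finset.inf'_le _ (Finset.mem_univ i)
  have hend : ∀ i, s i - δ ∈ Icc (0:ℝ) 1 ∧ s i + δ ∈ Icc (0:ℝ) 1 := by
    intro i
    have h1 := hδle i
    rw [le_min_iff, le_min_iff] at h1
    have h2 := (hmem i).1
    have h3 := (hmem i).2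
    exact ⟨⟨by linarith [h1.2.1], by linarith⟩, ⟨by linarith, by linarith [h1.2.2]⟩⟩
  set Φ : ℝ → Fin n → EuclideanSpace ℂ (Fin n) :=
    fun t i => ∫ u in (s i - δ)..(s i + δ), f t u with hΦ
  set w : ℝ → Fin n → EuclideanSpace ℂ (Fin n) := fun t i => (2*δ)⁻¹ • Φ t i with hw
  have h2δ0 : (2*δ : ℝ) ≠ 0 := by positivity
  have hest : ∀ i, dist (w t₀ i) (f t₀ (s i)) ≤ ε/2 := by
    intro i
    have hint : IntervalIntegrable (f t₀) volume (s i - δ) (s i + δ) :=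
      int_integrable hf ht₀ (hend i).1 (hend i).2
    have hintc : IntervalIntegrable (fun _ : ℝ => f t₀ (s i)) volume (s i - δ) (s i + δ) :=
      intervalIntegrable_const
    have hbound : ∀ u ∈ uIoc (s i - δ) (s i + δ), ‖f t₀ u - f t₀ (s i)‖ ≤ ε/2 := by
      intro u hu
      have hu' : u ∈ Icc (s i - δ) (s i + δ) := by
        rw [uIoc_of_le (by linarith : s i - δ ≤ s i + δ)] at hu
        exact Ioc_subset_Icc_self hu
      have hd : dist u (s i) < η i := by
        rw [Real.dist_eq]
        have habs : |u - s i| ≤ δ := abs_le.mpr ⟨by linarith [hu'.1], by linarith [hu'.2]⟩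
        have hδη : δ < η i := by
          have h := hδle i; rw [le_min_iff] at h; linarith [hηpos i, h.1]
        linarith
      have := hηlt i u hd
      rw [dist_eq_norm] at this
      exact this.le
    have hkey : ‖Φ t₀ i - (2*δ) • f t₀ (s i)‖ ≤ ε/2 * (2*δ) := by
      have hsub : Φ t₀ i - (2*δ) • f t₀ (s i)
          = ∫ u in (s i - δ)..(s i + δ), (f t₀ u - f t₀ (s i)) := by
        rw [intervalIntegral.integral_sub hint hintc, intervalIntegral.integral_const]
        congr 1
        congr 1
        ring
      rw [hsub]
      have := intervalIntegral.norm_integral_le_of_norm_le_const hbound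
      calc ‖∫ u in (s i - δ)..(s i + δ), (f t₀ u - f t₀ (s i))‖
          ≤ ε/2 * |(s i + δ) - (s i - δ)| := this
        _ = ε/2 * (2*δ) := by rw [abs_of_pos (by linarith)]; ring_nf
    rw [hw, dist_eq_norm]
    have : (2*δ:ℝ)⁻¹ • Φ t₀ i - f t₀ (s i) = (2*δ:ℝ)⁻¹ • (Φ t₀ i - (2*δ) • f t₀ (s i)) := by
      rw [smul_sub, smul_smul, inv_mul_cancel₀ h2δ0, one_smul]
    rw [this, norm_smul, Real.norm_eq_abs, abs_of_pos (by positivity)]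
    calc (2*δ:ℝ)⁻¹ * ‖Φ t₀ i - (2*δ) • f t₀ (s i)‖ ≤ (2*δ:ℝ)⁻¹ * (ε/2 * (2*δ)) := by
          apply mul_le_mul_of_nonneg_left hkey (by positivity)
      _ = ε/2 := by field_simp
  have hwt₀ : w t₀ ∈ Metric.ball (fun i => f t₀ (s i)) ε := by
    rw [Metric.mem_ball, dist_pi_lt_iff hε]
    intro i
    exact lt_of_le_of_lt (hest i) (by linarith)
  have hwc : ContinuousOn w (Icc 0 1) := by
    rw [continuousOn_pi]
    intro i
    exact (cont_integral hf (hend i).1 (hend i).2).const_smul ((2*δ)⁻¹ : ℝ)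
  have hmemn : w ⁻¹' (Metric.ball (fun i => f t₀ (s i)) ε) ∈ nhdsWithin t₀ (Icc 0 1) :=
    (hwc t₀ ht₀) (Metric.isOpen_ball.mem_nhds hwt₀)
  rw [mem_nhdsWithin] at hmemn
  obtain ⟨V, hVopen, hV₀, hVsub⟩ := hmemn
  refine ⟨fun i => s i - δ, fun i => s i + δ, ?_, V, hVopen, hV₀, ?_⟩
  · intro i
    exact ⟨(hend i).1, (hend i).2, by show s i - δ ≤ s i + δ; linarith⟩
  · intro t ht
    have hwt : w t ∈ Metric.ball (fun i => f t₀ (s i)) ε := hVsub ht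
    have hliw : LinearIndependent ℂ (w t) := hball (Metric.mem_ball.1 hwt)
    have h2δC : ((2*δ : ℝ) : ℂ) ≠ 0 := by exact_mod_cast h2δ0
    have hsc := hliw.units_smul (fun _ : Fin n => Units.mk0 ((2*δ:ℝ) : ℂ) h2δC)
    have heq : (fun i => Φ t i) = (fun _ : Fin n => Units.mk0 ((2*δ:ℝ) : ℂ) h2δC) • w t := by
      funext i
      show Φ t i = ((2*δ:ℝ) : ℂ) • ((2*δ:ℝ)⁻¹ • Φ t i)
      rw [show (((2*δ:ℝ)) : ℂ) • ((2*δ:ℝ)⁻¹ • Φ t i) = (2*δ:ℝ) • ((2*δ:ℝ)⁻¹ • Φ t i) by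
        rw [← Complex.coe_algebraMap, algebraMap_smul]]
      rw [smul_inv_smul₀ h2δ0]
    rw [hΦ] at heq
    rw [← heq] at hsc
    exact hsc

end helpers2

private lemma mem_span_parts {n N : ℕ} {P : Finset ℝ} (hcard : P.card = N + 1)
    (hPsub : ∀ x ∈ P, x ∈ Icc (0:ℝ) 1)
    {g : ℝ → EuclideanSpace ℂ (Fin n)}
    (hg : ∀ a b : ℝ, a ∈ Icc (0:ℝ) 1 → b ∈ Icc (0:ℝ) 1 → IntervalIntegrable g volume a b)
    {a b : ℝ} (ha : a ∈ P) (hb : b ∈ P) (hab : a ≤ b) :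
    (∫ u in a..b, g u) ∈ Submodule.span ℂ (Set.range fun j : Fin N =>
      ∫ u in (P.orderEmbOfFin hcard j.castSucc : ℝ)..(P.orderEmbOfFin hcard j.succ : ℝ), g u) := by
  set e := P.orderEmbOfFin hcard with he
  have hrange : ∀ x ∈ P, ∃ i : Fin (N+1), e i = x := by
    intro x hx
    have : x ∈ Set.range e := by rw [he, Finset.range_orderEmbOfFin]; exact_mod_cast hx
    exact this
  obtain ⟨i, hi⟩ := hrange a ha
  obtain ⟨j, hj⟩ := hrange b hb
  have hij : i ≤ j := e.le_iff_le.1 (by rw [hi, hj]; exact hab)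
  set A : ℕ → ℝ := fun m => e ⟨min m N, Nat.lt_succ_of_le (min_le_right m N)⟩ with hA
  have hmemA : ∀ m, A m ∈ Icc (0:ℝ) 1 := fun m => hPsub _ (Finset.orderEmbOfFin_mem _ _ _)
  have hint : ∀ k ∈ Set.Ico i.val j.val, IntervalIntegrable g volume (A k) (A (k+1)) :=
    fun k _ => hg _ _ (hmemA k) (hmemA (k+1))
  have hidx : ∀ m : Fin (N+1),
      (⟨min m.val N, Nat.lt_succ_of_le (min_le_right _ _)⟩ : Fin (N+1)) = m := by
    intro m
    have := m.isLt
    simp [Fin.ext_iff]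
    omega
  have hAi : A i.val = a := by simp only [hA]; rw [hidx i, hi]
  have hAj : A j.val = b := by simp only [hA]; rw [hidx j, hj]
  have hsum := intervalIntegral.sum_integral_adjacent_intervals_Ico
    (μ := volume) (a := A) (Fin.le_iff_val_le_val.1 hij) hint
  rw [hAi, hAj] at hsum
  rw [← hsum]
  apply Submodule.sum_mem
  intro k hk
  rw [Finset.mem_Ico] at hk
  have hkN : k < N := lt_of_lt_of_le hk.2 (Nat.lt_succ_iff.1 j.isLt)
  apply Submodule.subset_span
  refine ⟨⟨k, hkN⟩, ?_⟩
  have h1 : e ((⟨k, hkN⟩ : Fin N).castSucc) = A k := by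
    simp only [hA]
    congr 1
    simp [Fin.ext_iff]
    omega
  have h2 : e ((⟨k, hkN⟩ : Fin N).succ) = A (k+1) := by
    simp only [hA]
    congr 1
    simp [Fin.ext_iff]
    omega
  show (∫ u in (e ((⟨k, hkN⟩ : Fin N).castSucc) : ℝ)..(e ((⟨k, hkN⟩ : Fin N).succ) : ℝ), g u)
      = ∫ x in A k..A (k+1), g x
  rw [h1, h2]


/-- for a continuous family of nowhere flat paths `f(t,·) : [0,1] → ℂⁿ`
there is a partition `0 = s₀ < s₁ < ⋯ < s_N = 1` (with `N ≥ n`) such that the vectors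
`V_j(t) = ∫_{s_{j-1}}^{s_j} f(t,s) ds`, `j = 1,…,N`, span `ℂⁿ` for every `t ∈ [0,1]`. -/
theorem stmt_4
    (n : ℕ) (hn : 1 ≤ n)
    (f : ℝ → ℝ → EuclideanSpace ℂ (Fin n))
    (hf : ContinuousOn (fun p : ℝ × ℝ => f p.1 p.2) (Icc 0 1 ×ˢ Icc 0 1))
    (hflat : ∀ t ∈ Icc (0:ℝ) 1, NowhereFlat (f t)) :
    ∃ N : ℕ, n ≤ N ∧ ∃ s : Fin (N + 1) → ℝ,
      s 0 = 0 ∧ s (Fin.last N) = 1 ∧ StrictMono s ∧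
      ∀ t ∈ Icc (0:ℝ) 1,
        Submodule.span ℂ
          (Set.range fun j : Fin N => ∫ u in (s j.castSucc)..(s j.succ), f t u) = ⊤ := by
  classical
  have hloc : ∀ t₀ : Icc (0:ℝ) 1, ∃ c d : Fin n → ℝ,
      (∀ i, c i ∈ Icc (0:ℝ) 1 ∧ d i ∈ Icc (0:ℝ) 1 ∧ c i ≤ d i) ∧
      ∃ V : Set ℝ, IsOpen V ∧ (t₀ : ℝ) ∈ V ∧ ∀ t ∈ V ∩ Icc (0:ℝ) 1,
        LinearIndependent ℂ fun i => ∫ u in (c i)..(d i), f t u :=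
    fun t₀ => local_data hn hf t₀.2 (hflat _ t₀.2)
  choose c d hcd V hVopen hV₀ hVli using hloc
  have hcover : Icc (0:ℝ) 1 ⊆ ⋃ k : Icc (0:ℝ) 1, V k :=
    fun t ht => mem_iUnion.2 ⟨⟨t, ht⟩, hV₀ _⟩
  obtain ⟨T, hT⟩ := isCompact_Icc.elim_finite_subcover V hVopen hcover
  set P : Finset ℝ := {0, 1} ∪ T.biUnion (fun k =>
    Finset.image (c k) Finset.univ ∪ Finset.image (d k) Finset.univ) with hP
  have hP0 : (0:ℝ) ∈ P := Finset.mem_union_left _ (by simp)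
  have hP1 : (1:ℝ) ∈ P := Finset.mem_union_left _ (by simp)
  have hPsub : ∀ x ∈ P, x ∈ Icc (0:ℝ) 1 := by
    intro x hx
    rw [hP, Finset.mem_union] at hx
    rcases hx with hx | hx
    · rcases Finset.mem_insert.1 hx with rfl | hx
      · exact ⟨le_refl 0, zero_le_one⟩
      · rw [Finset.mem_singleton] at hx
        rw [hx]; exact ⟨zero_le_one, le_refl 1⟩
    · rw [Finset.mem_biUnion] at hx
      obtain ⟨k, hkT, hk⟩ := hx
      rw [Finset.mem_union] at hk
      rcases hk with hk | hk
      · obtain ⟨i, _, rfl⟩ := Finset.mem_image.1 hk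
        exact (hcd k i).1
      · obtain ⟨i, _, rfl⟩ := Finset.mem_image.1 hk
        exact (hcd k i).2.1
  have hPpos : 0 < P.card := Finset.card_pos.2 ⟨0, hP0⟩
  set N : ℕ := P.card - 1 with hN
  have hcard : P.card = N + 1 := by omega
  set e := P.orderEmbOfFin hcard with he
  set s : Fin (N + 1) → ℝ := fun j => e j with hs
  have hcP : ∀ k ∈ T, ∀ i, c k i ∈ P := by
    intro k hk i
    refine Finset.mem_union_right _ (Finset.mem_biUnion.2 ⟨k, hk, ?_⟩)
    exact Finset.mem_union_left _ (Finset.mem_image_of_mem _ (Finset.mem_univ i))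
  have hdP : ∀ k ∈ T, ∀ i, d k i ∈ P := by
    intro k hk i
    refine Finset.mem_union_right _ (Finset.mem_biUnion.2 ⟨k, hk, ?_⟩)
    exact Finset.mem_union_right _ (Finset.mem_image_of_mem _ (Finset.mem_univ i))
  have hspan : ∀ t ∈ Icc (0:ℝ) 1,
      Submodule.span ℂ
        (Set.range fun j : Fin N => ∫ u in (s j.castSucc)..(s j.succ), f t u) = ⊤ := by
    intro t ht
    obtain ⟨k, hkT, hkV⟩ := mem_iUnion₂.1 (hT ht)
    have hli := hVli k t ⟨hkV, ht⟩
    have htop : Submodule.span ℂ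
        (Set.range fun i : Fin n => ∫ u in (c k i)..(d k i), f t u) = ⊤ :=
      hli.span_eq_top_of_card_eq_finrank'
        (by simp [finrank_euclideanSpace_fin])
    rw [eq_top_iff, ← htop, Submodule.span_le]
    rintro _ ⟨i, rfl⟩
    exact mem_span_parts hcard hPsub (fun a b ha hb => int_integrable hf ht ha hb)
      (hcP k hkT i) (hdP k hkT i) (hcd k i).2.2
  refine ⟨N, ?_, s, ?_, ?_, fun a b hab => e.strictMono hab, hspan⟩
  · have h0 : (0:ℝ) ∈ Icc (0:ℝ) 1 := ⟨le_refl 0, zero_le_one⟩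
    have h := finrank_le_of_span_eq_top (hspan 0 h0)
    rw [finrank_euclideanSpace_fin] at h
    simpa using h
  · have hz : s 0 = P.min' ⟨0, hP0⟩ := by
      rw [hs, he]
      exact Finset.orderEmbOfFin_zero hcard (Nat.succ_pos N)
    rw [hz]
    exact le_antisymm (P.min'_le _ hP0) (hPsub _ (P.min'_mem _)).1
  · have hz : s (Fin.last N) = P.max' ⟨0, hP0⟩ := by
      rw [hs, he]
      exact Finset.orderEmbOfFin_last hcard (Nat.succ_pos N)
    rw [hz]
    exact le_antisymm (hPsub _ (P.max'_mem _)).2 (P.le_max' _ hP1)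
end

section
/- Let I' be a nontrivial closed subinterval of I = [0,1], and let f : I → ℂ and a : I → ℂ \ {0} be continuous functions such that f is not constant on I'. Then there exist an integer N ≥ 2 and continuous functions g₁, …, g_N : I → ℂ, each vanishing identically on I \ I', such that, setting h(ζ,s) := ∏_{i=1}^N (1 + ζᵢ gᵢ(s)) for ζ ∈ ℂᴺ and s ∈ I, the derivative at ζ = 0 of the map ℂᴺ ∋ ζ ↦ ∫₀¹ a(s) (h(ζ,s) f(s), h(ζ,s)² f(s)²) ds ∈ ℂ² is a surjective ℂ-linear map ℂᴺ → ℂ². -/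
open MeasureTheory Set

lemma cOn_int {E : Type*} [NormedAddCommGroup E] {u : ℝ → E} (h : ContinuousOn u (Icc (0:ℝ) 1)) :
    IntervalIntegrable u volume 0 1 :=
  (by rwa [Set.uIcc_of_le zero_le_one] : ContinuousOn u (uIcc (0:ℝ) 1)).intervalIntegrable

lemma pair_integral {u v : ℝ → ℂ} (hu : IntervalIntegrable u volume 0 1)
    (hv : IntervalIntegrable v volume 0 1) :
    ∫ s in (0:ℝ)..1, (u s, v s) = ((∫ s in (0:ℝ)..1, u s), ∫ s in (0:ℝ)..1, v s) := by
  rw [intervalIntegral.integral_of_le zero_le_one, intervalIntegral.integral_of_le zero_le_one,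
      intervalIntegral.integral_of_le zero_le_one]
  exact integral_pair hu.1 hv.1

lemma zero_quad {u v : (Fin 2 → ℂ) → ℂ} {u' v' : (Fin 2 → ℂ) →L[ℂ] ℂ}
    (hu : HasFDerivAt u u' 0) (hv : HasFDerivAt v v' 0)
    (hu0 : u 0 = 0) (hv0 : v 0 = 0) (w : ℂ × ℂ) :
    HasFDerivAt (fun ζ => (u ζ * v ζ) • w) (0 : (Fin 2 → ℂ) →L[ℂ] ℂ × ℂ) 0 := by
  have h := (hu.mul hv).smul_const w
  rw [hu0, hv0] at h
  have hz : ((0:ℂ) • v' + (0:ℂ) • u').smulRight w = (0 : (Fin 2 → ℂ) →L[ℂ] ℂ × ℂ) := by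
    ext ζ <;> simp
  rwa [hz] at h
lemma keyB (c d : ℝ) (hc : 0 ≤ c) (hcd : c < d) (hd : d ≤ 1)
    (f a h₀ : ℝ → ℂ)
    (hac : ContinuousOn a (Icc (0:ℝ) 1))
    (ha0 : ∀ s ∈ Icc (0:ℝ) 1, a s ≠ 0)
    (hh0 : ContinuousOn h₀ (Icc (0:ℝ) 1))
    (hall : ∀ g : ℝ → ℂ, ContinuousOn g (Icc (0:ℝ) 1) →
      (∀ s ∈ Icc (0:ℝ) 1 \ Icc c d, g s = 0) →
      (∫ s in (0:ℝ)..1, a s * g s * h₀ s) = 0) :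
    ∀ s ∈ Icc c d, h₀ s = 0 := by
  have hsub : Icc c d ⊆ Icc (0:ℝ) 1 := Icc_subset_Icc hc hd
  -- first: vanishing on the open interval
  have hIoo : ∀ t ∈ Ioo c d, h₀ t = 0 := by
    intro t ht
    by_contra hne
    have htI : t ∈ Icc (0:ℝ) 1 := hsub (mem_Icc_of_Ioo ht)
    set ψ : ℝ → ℝ := fun s => max 0 ((s - c) * (d - s)) with hψdef
    have hψc : Continuous ψ := continuous_const.max (by continuity)
    have hψnn : ∀ s, 0 ≤ ψ s := fun s => le_max_left _ _
    set g : ℝ → ℂ := fun s => (ψ s : ℂ) * (starRingEnd ℂ) (a s * h₀ s) with hgdef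
    have hgc : ContinuousOn g (Icc (0:ℝ) 1) :=
      ((Complex.continuous_ofReal.comp hψc).continuousOn).mul ((hac.mul hh0).star)
    have hg0 : ∀ s ∈ Icc (0:ℝ) 1 \ Icc c d, g s = 0 := by
      intro s hs
      have hsnot : s < c ∨ d < s := by
        rcases hs.2 ∘ mem_Icc.mpr with h
        by_contra hcon
        push_neg at hcon
        exact hs.2 (mem_Icc.mpr ⟨hcon.1, hcon.2⟩)
      have : (s - c) * (d - s) ≤ 0 := by
        rcases hsnot with h | h
        · exact mul_nonpos_of_nonpos_of_nonneg (by linarith) (by linarith)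
        · exact mul_nonpos_of_nonneg_of_nonpos (by linarith) (by linarith)
      have : ψ s = 0 := max_eq_left this
      simp [hgdef, this]
    set F : ℝ → ℝ := fun s => ψ s * Complex.normSq (a s * h₀ s) with hFdef
    have hpt : ∀ s, (F s : ℂ) = a s * g s * h₀ s := by
      intro s
      simp only [hFdef, hgdef]
      push_cast
      rw [← Complex.mul_conj (a s * h₀ s)]
      ring
    have hint0 : (∫ s in (0:ℝ)..1, (F s : ℂ)) = 0 := by
      rw [show (fun s => (F s : ℂ)) = fun s => a s * g s * h₀ s from funext hpt]
      exact hall g hgc hg0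
    rw [intervalIntegral.integral_ofReal, Complex.ofReal_eq_zero] at hint0
    have hFc : ContinuousOn F (Icc (0:ℝ) 1) :=
      hψc.continuousOn.mul (Complex.continuous_normSq.comp_continuousOn (hac.mul hh0))
    have hFnn : ∀ s, 0 ≤ F s := fun s => mul_nonneg (hψnn s) (Complex.normSq_nonneg _)
    have hFt : 0 < F t := by
      apply mul_nonneg (hψnn t) (Complex.normSq_nonneg _) |>.lt_of_ne
      symm
      apply mul_ne_zero
      · have : 0 < (t - c) * (d - t) := mul_pos (by linarith [ht.1]) (by linarith [ht.2])
        have : 0 < ψ t := lt_of_lt_of_le this (le_max_right _ _)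
        exact this.ne'
      · exact Complex.normSq_pos.mpr (mul_ne_zero (ha0 t htI) hne) |>.ne'
    -- positivity of integral from support measure
    have htIoo : t ∈ Ioo (0:ℝ) 1 := ⟨lt_of_le_of_lt hc ht.1, lt_of_lt_of_le ht.2 hd⟩
    have hCt : ContinuousAt F t := hFc.continuousAt (Icc_mem_nhds htIoo.1 htIoo.2)
    have hev : ∀ᶠ s in nhds t, 0 < F s := hCt.eventually (eventually_gt_nhds hFt)
    have hev2 : ∀ᶠ s in nhds t, 0 < F s ∧ s ∈ Ioo (0:ℝ) 1 :=
      hev.and (isOpen_Ioo.eventually_mem htIoo)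
    obtain ⟨ε, hε, hball⟩ := Metric.eventually_nhds_iff.mp hev2
    have hpos : 0 < ∫ s in (0:ℝ)..1, F s := by
      rw [intervalIntegral.integral_pos_iff_support_of_nonneg_ae
        (Filter.Eventually.of_forall hFnn) (cOn_int hFc)]
      refine ⟨zero_lt_one, ?_⟩
      have hsubset : Metric.ball t ε ⊆ Function.support F ∩ Ioc 0 1 := by
        intro s hs
        have := hball (by simpa [Metric.mem_ball] using hs)
        exact ⟨(this.1).ne', Ioo_subset_Ioc_self this.2⟩
      calc (0:ENNReal) < volume (Metric.ball t ε) := by simp [Real.volume_ball, hε]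
        _ ≤ _ := measure_mono hsubset
    exact hpos.ne' hint0
  -- extend to closed interval
  intro s hs
  have hscl : s ∈ closure (Ioo c d) := by rw [closure_Ioo hcd.ne]; exact hs
  have hnb : (nhdsWithin s (Ioo c d)).NeBot := mem_closure_iff_nhdsWithin_neBot.mp hscl
  have h1 : Filter.Tendsto h₀ (nhdsWithin s (Ioo c d)) (nhds (h₀ s)) :=
    ((hh0 s (hsub hs)).mono (fun x hx => hsub (mem_Icc_of_Ioo hx)))
  have h2 : Filter.Tendsto h₀ (nhdsWithin s (Ioo c d)) (nhds 0) := by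
    apply Filter.Tendsto.congr' _ tendsto_const_nhds
    filter_upwards [self_mem_nhdsWithin] with x hx
    exact (hIoo x hx).symm
  exact tendsto_nhds_unique h1 h2
lemma keyC (c d : ℝ) (hc : 0 ≤ c) (hcd : c < d) (hd : d ≤ 1)
    (f : ℝ → ℂ) (hf : ContinuousOn f (Icc (0:ℝ) 1))
    (α β : ℂ) (hαβ : ¬(α = 0 ∧ β = 0))
    (hz : ∀ s ∈ Icc c d, α * f s + β * (f s) ^ 2 = 0)
    (hnc : ∃ s₁ ∈ Icc c d, ∃ s₂ ∈ Icc c d, f s₁ ≠ f s₂) : False := by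
  have hsub : Icc c d ⊆ Icc (0:ℝ) 1 := Icc_subset_Icc hc hd
  obtain ⟨s₁, hs₁, s₂, hs₂, hne⟩ := hnc
  by_cases hβ : β = 0
  · have hα : α ≠ 0 := fun h => hαβ ⟨h, hβ⟩
    have hzz : ∀ s ∈ Icc c d, f s = 0 := by
      intro s hs
      have := hz s hs
      rw [hβ] at this
      simpa [hα] using this
    exact hne ((hzz s₁ hs₁).trans (hzz s₂ hs₂).symm)
  · set w : ℂ := -α / β with hw
    have hval : ∀ s ∈ Icc c d, f s = 0 ∨ f s = w := by
      intro s hs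
      have h := hz s hs
      have : f s * (α + β * f s) = 0 := by rw [← h]; ring
      rcases mul_eq_zero.mp this with h1 | h1
      · exact Or.inl h1
      · right
        rw [hw, eq_div_iff hβ]
        linear_combination h1
    have h₁ := hval s₁ hs₁
    have h₂ := hval s₂ hs₂
    -- establish: ‖f s₁‖ and ‖f s₂‖ are 0 and ‖w‖ in some order, w ≠ 0
    have hw0 : w ≠ 0 := by
      intro hwz
      rcases h₁ with h | h <;> rcases h₂ with h' | h' <;>
        exact hne (by simp [h, h', hwz])
    have hnorm : (‖f s₁‖ = 0 ∧ ‖f s₂‖ = ‖w‖) ∨ (‖f s₁‖ = ‖w‖ ∧ ‖f s₂‖ = 0) := by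
      rcases h₁ with h | h <;> rcases h₂ with h' | h'
      · exact absurd (h.trans h'.symm) hne
      · exact Or.inl ⟨by simp [h], by simp [h']⟩
      · exact Or.inr ⟨by simp [h], by simp [h']⟩
      · exact absurd (h.trans h'.symm) hne
    have hwpos : 0 < ‖w‖ := norm_pos_iff.mpr hw0
    have huv : uIcc s₁ s₂ ⊆ Icc c d := by
      rw [uIcc_eq_union]
      exact union_subset (Icc_subset_Icc hs₁.1 hs₂.2) (Icc_subset_Icc hs₂.1 hs₁.2)
    have hcont : ContinuousOn (fun s => ‖f s‖) (uIcc s₁ s₂) :=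
      (hf.mono (huv.trans hsub)).norm
    have hmem : ‖w‖ / 2 ∈ uIcc ‖f s₁‖ ‖f s₂‖ := by
      rcases hnorm with ⟨e1, e2⟩ | ⟨e1, e2⟩ <;> rw [e1, e2, mem_uIcc] <;>
        [left; right] <;> constructor <;> linarith
    obtain ⟨s₃, hs₃, hfs₃⟩ := intermediate_value_uIcc hcont hmem
    have hfs₃' : ‖f s₃‖ = ‖w‖ / 2 := hfs₃
    rcases hval s₃ (huv hs₃) with h | h
    · rw [h, norm_zero] at hfs₃'; linarith
    · rw [h] at hfs₃'; linarith

lemma exists_indep (c d : ℝ) (hc : 0 ≤ c) (hcd : c < d) (hd : d ≤ 1)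
    (f a : ℝ → ℂ)
    (hf : ContinuousOn f (Icc (0:ℝ) 1))
    (hac : ContinuousOn a (Icc (0:ℝ) 1))
    (ha0 : ∀ s ∈ Icc (0:ℝ) 1, a s ≠ 0)
    (hnc : ∃ s₁ ∈ Icc c d, ∃ s₂ ∈ Icc c d, f s₁ ≠ f s₂) :
    ∃ g₀ g₁ : ℝ → ℂ,
      (ContinuousOn g₀ (Icc (0:ℝ) 1) ∧ ∀ s ∈ Icc (0:ℝ) 1 \ Icc c d, g₀ s = 0) ∧
      (ContinuousOn g₁ (Icc (0:ℝ) 1) ∧ ∀ s ∈ Icc (0:ℝ) 1 \ Icc c d, g₁ s = 0) ∧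
      (∫ s in (0:ℝ)..1, a s * g₀ s * f s) * (∫ s in (0:ℝ)..1, a s * g₁ s * (f s) ^ 2) -
        (∫ s in (0:ℝ)..1, a s * g₁ s * f s) * (∫ s in (0:ℝ)..1, a s * g₀ s * (f s) ^ 2) ≠ 0 := by
  set Adm : (ℝ → ℂ) → Prop :=
    fun g => ContinuousOn g (Icc (0:ℝ) 1) ∧ ∀ s ∈ Icc (0:ℝ) 1 \ Icc c d, g s = 0 with hAdm
  set x : (ℝ → ℂ) → ℂ := fun g => ∫ s in (0:ℝ)..1, a s * g s * f s with hx
  set y : (ℝ → ℂ) → ℂ := fun g => ∫ s in (0:ℝ)..1, a s * g s * (f s) ^ 2 with hy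
  by_contra hcon
  push_neg at hcon
  have hdet : ∀ g₀ g₁, Adm g₀ → Adm g₁ → x g₀ * y g₁ - x g₁ * y g₀ = 0 := by
    intro g₀ g₁ h₀ h₁
    by_contra hne
    exact hne (hcon g₀ g₁ h₀ h₁)
  -- a killing functional
  obtain ⟨α, β, hαβ, hker⟩ : ∃ α β : ℂ, ¬(α = 0 ∧ β = 0) ∧
      ∀ g, Adm g → α * x g + β * y g = 0 := by
    by_cases hz : ∃ g₀, Adm g₀ ∧ (x g₀ ≠ 0 ∨ y g₀ ≠ 0)
    · obtain ⟨g₀, hg₀, hne⟩ := hz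
      refine ⟨y g₀, -(x g₀), ?_, ?_⟩
      · rintro ⟨h1, h2⟩
        rcases hne with h | h
        · exact h (by simpa using h2)
        · exact h h1
      · intro g hg
        have := hdet g g₀ hg hg₀
        linear_combination this
    · push_neg at hz
      exact ⟨1, 0, by simp, fun g hg => by simp [(hz g hg).1]⟩
  -- convert to integral form and apply keyB
  have hint : ∀ g, Adm g →
      (∫ s in (0:ℝ)..1, a s * g s * (α * f s + β * (f s) ^ 2)) = 0 := by
    intro g hg
    have h1 : IntervalIntegrable (fun s => α • (a s * g s * f s)) volume 0 1 :=
      cOn_int (continuousOn_const.fun_smul ((hac.mul hg.1).mul hf))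
    have h2 : IntervalIntegrable (fun s => β • (a s * g s * (f s) ^ 2)) volume 0 1 :=
      cOn_int (continuousOn_const.fun_smul ((hac.mul hg.1).mul (hf.pow 2)))
    have : (∫ s in (0:ℝ)..1, a s * g s * (α * f s + β * (f s) ^ 2)) =
        (∫ s in (0:ℝ)..1, (α • (a s * g s * f s) + β • (a s * g s * (f s) ^ 2))) := by
      apply intervalIntegral.integral_congr
      intro s _
      simp only [smul_eq_mul]
      ring
    rw [this, intervalIntegral.integral_add h1 h2, intervalIntegral.integral_smul,
      intervalIntegral.integral_smul]
    simpa only [smul_eq_mul] using hker g hg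
  have hvanish : ∀ s ∈ Icc c d, α * f s + β * (f s) ^ 2 = 0 := by
    apply keyB c d hc hcd hd f a _ hac ha0
      (((continuousOn_const.mul hf)).add (continuousOn_const.mul (hf.pow 2)))
    intro g hgc hg0
    exact hint g ⟨hgc, hg0⟩
  exact keyC c d hc hcd hd f hf α β hαβ hvanish hnc
lemma derivComp2 (f a g₀ g₁ : ℝ → ℂ)
    (hf : ContinuousOn f (Icc (0:ℝ) 1)) (hac : ContinuousOn a (Icc (0:ℝ) 1))
    (hg₀c : ContinuousOn g₀ (Icc (0:ℝ) 1)) (hg₁c : ContinuousOn g₁ (Icc (0:ℝ) 1)) :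
    HasFDerivAt
      (fun ζ : Fin 2 → ℂ =>
        ∫ s in (0:ℝ)..1,
          (a s * (∏ i, (1 + ζ i * ![g₀, g₁] i s)) * f s,
           a s * (∏ i, (1 + ζ i * ![g₀, g₁] i s)) ^ 2 * (f s) ^ 2))
      ((ContinuousLinearMap.proj 0 : (Fin 2 → ℂ) →L[ℂ] ℂ).smulRight
          ((∫ s in (0:ℝ)..1, a s * g₀ s * f s, 2 * ∫ s in (0:ℝ)..1, a s * g₀ s * (f s) ^ 2)) +
       (ContinuousLinearMap.proj 1 : (Fin 2 → ℂ) →L[ℂ] ℂ).smulRight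
          ((∫ s in (0:ℝ)..1, a s * g₁ s * f s, 2 * ∫ s in (0:ℝ)..1, a s * g₁ s * (f s) ^ 2))) 0 := by
  -- continuity facts for the nine coefficient functions
  have c00 : ContinuousOn (fun s => ((a s * f s, a s * (f s) ^ 2) : ℂ × ℂ)) (Icc (0:ℝ) 1) :=
    (hac.mul hf).prodMk (hac.mul (hf.pow 2))
  have c10 : ContinuousOn
      (fun s => ((a s * g₀ s * f s, 2 * (a s * g₀ s * (f s) ^ 2)) : ℂ × ℂ)) (Icc (0:ℝ) 1) :=
    ((hac.mul hg₀c).mul hf).prodMk (continuousOn_const.mul ((hac.mul hg₀c).mul (hf.pow 2)))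
  have c01 : ContinuousOn
      (fun s => ((a s * g₁ s * f s, 2 * (a s * g₁ s * (f s) ^ 2)) : ℂ × ℂ)) (Icc (0:ℝ) 1) :=
    ((hac.mul hg₁c).mul hf).prodMk (continuousOn_const.mul ((hac.mul hg₁c).mul (hf.pow 2)))
  have c11 : ContinuousOn
      (fun s => ((a s * g₀ s * g₁ s * f s, 4 * (a s * g₀ s * g₁ s * (f s) ^ 2)) : ℂ × ℂ))
      (Icc (0:ℝ) 1) :=
    (((hac.mul hg₀c).mul hg₁c).mul hf).prodMk
      (continuousOn_const.mul (((hac.mul hg₀c).mul hg₁c).mul (hf.pow 2)))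
  have c20 : ContinuousOn (fun s => (((0:ℂ), a s * g₀ s ^ 2 * (f s) ^ 2) : ℂ × ℂ)) (Icc (0:ℝ) 1) :=
    continuousOn_const.prodMk ((hac.mul (hg₀c.pow 2)).mul (hf.pow 2))
  have c02 : ContinuousOn (fun s => (((0:ℂ), a s * g₁ s ^ 2 * (f s) ^ 2) : ℂ × ℂ)) (Icc (0:ℝ) 1) :=
    continuousOn_const.prodMk ((hac.mul (hg₁c.pow 2)).mul (hf.pow 2))
  have c21 : ContinuousOn
      (fun s => (((0:ℂ), 2 * (a s * g₀ s ^ 2 * g₁ s * (f s) ^ 2)) : ℂ × ℂ)) (Icc (0:ℝ) 1) :=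
    continuousOn_const.prodMk (continuousOn_const.mul (((hac.mul (hg₀c.pow 2)).mul hg₁c).mul (hf.pow 2)))
  have c12 : ContinuousOn
      (fun s => (((0:ℂ), 2 * (a s * g₀ s * g₁ s ^ 2 * (f s) ^ 2)) : ℂ × ℂ)) (Icc (0:ℝ) 1) :=
    continuousOn_const.prodMk (continuousOn_const.mul (((hac.mul hg₀c).mul (hg₁c.pow 2)).mul (hf.pow 2)))
  have c22 : ContinuousOn
      (fun s => (((0:ℂ), a s * g₀ s ^ 2 * g₁ s ^ 2 * (f s) ^ 2) : ℂ × ℂ)) (Icc (0:ℝ) 1) :=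
    continuousOn_const.prodMk (((hac.mul (hg₀c.pow 2)).mul (hg₁c.pow 2)).mul (hf.pow 2))
  -- the map equals an explicit polynomial in ζ
  have key : (fun ζ : Fin 2 → ℂ =>
        ∫ s in (0:ℝ)..1,
          (a s * (∏ i, (1 + ζ i * ![g₀, g₁] i s)) * f s,
           a s * (∏ i, (1 + ζ i * ![g₀, g₁] i s)) ^ 2 * (f s) ^ 2)) =
      fun ζ : Fin 2 → ℂ =>
        (∫ s in (0:ℝ)..1, ((a s * f s, a s * (f s) ^ 2) : ℂ × ℂ))
        + ζ 0 • (∫ s in (0:ℝ)..1, ((a s * g₀ s * f s, 2 * (a s * g₀ s * (f s) ^ 2)) : ℂ × ℂ))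
        + ζ 1 • (∫ s in (0:ℝ)..1, ((a s * g₁ s * f s, 2 * (a s * g₁ s * (f s) ^ 2)) : ℂ × ℂ))
        + (ζ 0 * ζ 1) •
            (∫ s in (0:ℝ)..1,
              ((a s * g₀ s * g₁ s * f s, 4 * (a s * g₀ s * g₁ s * (f s) ^ 2)) : ℂ × ℂ))
        + ζ 0 ^ 2 • (∫ s in (0:ℝ)..1, (((0:ℂ), a s * g₀ s ^ 2 * (f s) ^ 2) : ℂ × ℂ))
        + ζ 1 ^ 2 • (∫ s in (0:ℝ)..1, (((0:ℂ), a s * g₁ s ^ 2 * (f s) ^ 2) : ℂ × ℂ))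
        + (ζ 0 ^ 2 * ζ 1) •
            (∫ s in (0:ℝ)..1, (((0:ℂ), 2 * (a s * g₀ s ^ 2 * g₁ s * (f s) ^ 2)) : ℂ × ℂ))
        + (ζ 0 * ζ 1 ^ 2) •
            (∫ s in (0:ℝ)..1, (((0:ℂ), 2 * (a s * g₀ s * g₁ s ^ 2 * (f s) ^ 2)) : ℂ × ℂ))
        + (ζ 0 ^ 2 * ζ 1 ^ 2) •
            (∫ s in (0:ℝ)..1, (((0:ℂ), a s * g₀ s ^ 2 * g₁ s ^ 2 * (f s) ^ 2) : ℂ × ℂ)) := by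
    funext ζ
    have hEq : EqOn
        (fun s : ℝ => ((a s * (∏ i, (1 + ζ i * ![g₀, g₁] i s)) * f s,
           a s * (∏ i, (1 + ζ i * ![g₀, g₁] i s)) ^ 2 * (f s) ^ 2) : ℂ × ℂ))
        (fun s =>
          ((a s * f s, a s * (f s) ^ 2) : ℂ × ℂ)
          + ζ 0 • ((a s * g₀ s * f s, 2 * (a s * g₀ s * (f s) ^ 2)) : ℂ × ℂ)
          + ζ 1 • ((a s * g₁ s * f s, 2 * (a s * g₁ s * (f s) ^ 2)) : ℂ × ℂ)
          + (ζ 0 * ζ 1) •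
              ((a s * g₀ s * g₁ s * f s, 4 * (a s * g₀ s * g₁ s * (f s) ^ 2)) : ℂ × ℂ)
          + ζ 0 ^ 2 • (((0:ℂ), a s * g₀ s ^ 2 * (f s) ^ 2) : ℂ × ℂ)
          + ζ 1 ^ 2 • (((0:ℂ), a s * g₁ s ^ 2 * (f s) ^ 2) : ℂ × ℂ)
          + (ζ 0 ^ 2 * ζ 1) • (((0:ℂ), 2 * (a s * g₀ s ^ 2 * g₁ s * (f s) ^ 2)) : ℂ × ℂ)
          + (ζ 0 * ζ 1 ^ 2) • (((0:ℂ), 2 * (a s * g₀ s * g₁ s ^ 2 * (f s) ^ 2)) : ℂ × ℂ)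
          + (ζ 0 ^ 2 * ζ 1 ^ 2) • (((0:ℂ), a s * g₀ s ^ 2 * g₁ s ^ 2 * (f s) ^ 2) : ℂ × ℂ))
        (uIcc (0:ℝ) 1) := by
      intro s _
      simp only [Fin.prod_univ_two, Matrix.cons_val_zero, Matrix.cons_val_one, Matrix.head_cons,
        Prod.smul_mk, Prod.mk_add_mk, smul_eq_mul, Prod.mk.injEq, mul_zero]
      constructor <;> ring
    rw [intervalIntegral.integral_congr hEq]
    rw [intervalIntegral.integral_add ((((((((cOn_int c00).add (cOn_int (continuousOn_const.fun_smul c10))).add (cOn_int (continuousOn_const.fun_smul c01))).add (cOn_int (continuousOn_const.fun_smul c11))).add (cOn_int (continuousOn_const.fun_smul c20))).add (cOn_int (continuousOn_const.fun_smul c02))).add (cOn_int (continuousOn_const.fun_smul c21))).add (cOn_int (continuousOn_const.fun_smul c12))) (cOn_int (continuousOn_const.fun_smul c22)),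
        intervalIntegral.integral_add (((((((cOn_int c00).add (cOn_int (continuousOn_const.fun_smul c10))).add (cOn_int (continuousOn_const.fun_smul c01))).add (cOn_int (continuousOn_const.fun_smul c11))).add (cOn_int (continuousOn_const.fun_smul c20))).add (cOn_int (continuousOn_const.fun_smul c02))).add (cOn_int (continuousOn_const.fun_smul c21))) (cOn_int (continuousOn_const.fun_smul c12)),
        intervalIntegral.integral_add ((((((cOn_int c00).add (cOn_int (continuousOn_const.fun_smul c10))).add (cOn_int (continuousOn_const.fun_smul c01))).add (cOn_int (continuousOn_const.fun_smul c11))).add (cOn_int (continuousOn_const.fun_smul c20))).add (cOn_int (continuousOn_const.fun_smul c02))) (cOn_int (continuousOn_const.fun_smul c21)),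
        intervalIntegral.integral_add (((((cOn_int c00).add (cOn_int (continuousOn_const.fun_smul c10))).add (cOn_int (continuousOn_const.fun_smul c01))).add (cOn_int (continuousOn_const.fun_smul c11))).add (cOn_int (continuousOn_const.fun_smul c20))) (cOn_int (continuousOn_const.fun_smul c02)),
        intervalIntegral.integral_add ((((cOn_int c00).add (cOn_int (continuousOn_const.fun_smul c10))).add (cOn_int (continuousOn_const.fun_smul c01))).add (cOn_int (continuousOn_const.fun_smul c11))) (cOn_int (continuousOn_const.fun_smul c20)),
        intervalIntegral.integral_add (((cOn_int c00).add (cOn_int (continuousOn_const.fun_smul c10))).add (cOn_int (continuousOn_const.fun_smul c01))) (cOn_int (continuousOn_const.fun_smul c11)),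
        intervalIntegral.integral_add ((cOn_int c00).add (cOn_int (continuousOn_const.fun_smul c10))) (cOn_int (continuousOn_const.fun_smul c01)),
        intervalIntegral.integral_add (cOn_int c00) (cOn_int (continuousOn_const.fun_smul c10)),
        intervalIntegral.integral_smul,
        intervalIntegral.integral_smul,
        intervalIntegral.integral_smul,
        intervalIntegral.integral_smul,
        intervalIntegral.integral_smul,
        intervalIntegral.integral_smul,
        intervalIntegral.integral_smul,
        intervalIntegral.integral_smul]
  rw [key]
  -- derivatives of the building blocks
  have p0 : HasFDerivAt (fun ζ : Fin 2 → ℂ => ζ 0)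
      (ContinuousLinearMap.proj 0 : (Fin 2 → ℂ) →L[ℂ] ℂ) 0 :=
    (ContinuousLinearMap.proj 0 : (Fin 2 → ℂ) →L[ℂ] ℂ).hasFDerivAt
  have p1 : HasFDerivAt (fun ζ : Fin 2 → ℂ => ζ 1)
      (ContinuousLinearMap.proj 1 : (Fin 2 → ℂ) →L[ℂ] ℂ) 0 :=
    (ContinuousLinearMap.proj 1 : (Fin 2 → ℂ) →L[ℂ] ℂ).hasFDerivAt
  set W00 := ∫ s in (0:ℝ)..1, ((a s * f s, a s * (f s) ^ 2) : ℂ × ℂ)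
  set W10 := ∫ s in (0:ℝ)..1, ((a s * g₀ s * f s, 2 * (a s * g₀ s * (f s) ^ 2)) : ℂ × ℂ) with hW10def
  set W01 := ∫ s in (0:ℝ)..1, ((a s * g₁ s * f s, 2 * (a s * g₁ s * (f s) ^ 2)) : ℂ × ℂ) with hW01def
  set W11 := ∫ s in (0:ℝ)..1, ((a s * g₀ s * g₁ s * f s, 4 * (a s * g₀ s * g₁ s * (f s) ^ 2)) : ℂ × ℂ)
  set W20 := ∫ s in (0:ℝ)..1, (((0:ℂ), a s * g₀ s ^ 2 * (f s) ^ 2) : ℂ × ℂ)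
  set W02 := ∫ s in (0:ℝ)..1, (((0:ℂ), a s * g₁ s ^ 2 * (f s) ^ 2) : ℂ × ℂ)
  set W21 := ∫ s in (0:ℝ)..1, (((0:ℂ), 2 * (a s * g₀ s ^ 2 * g₁ s * (f s) ^ 2)) : ℂ × ℂ)
  set W12 := ∫ s in (0:ℝ)..1, (((0:ℂ), 2 * (a s * g₀ s * g₁ s ^ 2 * (f s) ^ 2)) : ℂ × ℂ)
  set W22 := ∫ s in (0:ℝ)..1, (((0:ℂ), a s * g₀ s ^ 2 * g₁ s ^ 2 * (f s) ^ 2) : ℂ × ℂ)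
  have h1 : HasFDerivAt (fun _ : Fin 2 → ℂ => W00) (0 : (Fin 2 → ℂ) →L[ℂ] ℂ × ℂ) 0 :=
    hasFDerivAt_const _ _
  have h2 := p0.smul_const W10
  have h3 := p1.smul_const W01
  have h4 := zero_quad p0 p1 rfl rfl W11
  have h5 : HasFDerivAt (fun ζ : Fin 2 → ℂ => ζ 0 ^ 2 • W20) (0 : (Fin 2 → ℂ) →L[ℂ] ℂ × ℂ) 0 := by
    have base := zero_quad p0 p0 rfl rfl W20
    have e : (fun ζ : Fin 2 → ℂ => ζ 0 ^ 2 • W20) = fun ζ : Fin 2 → ℂ => (ζ 0 * ζ 0) • W20 := by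
      funext ζ; congr 1; ring
    rw [e]; exact base
  have h6 : HasFDerivAt (fun ζ : Fin 2 → ℂ => ζ 1 ^ 2 • W02) (0 : (Fin 2 → ℂ) →L[ℂ] ℂ × ℂ) 0 := by
    have base := zero_quad p1 p1 rfl rfl W02
    have e : (fun ζ : Fin 2 → ℂ => ζ 1 ^ 2 • W02) = fun ζ : Fin 2 → ℂ => (ζ 1 * ζ 1) • W02 := by
      funext ζ; congr 1; ring
    rw [e]; exact base
  have h7 : HasFDerivAt (fun ζ : Fin 2 → ℂ => (ζ 0 ^ 2 * ζ 1) • W21)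
      (0 : (Fin 2 → ℂ) →L[ℂ] ℂ × ℂ) 0 := by
    have base := zero_quad p0 (p0.mul p1) rfl (by simp) W21
    have e : (fun ζ : Fin 2 → ℂ => (ζ 0 ^ 2 * ζ 1) • W21) =
        fun ζ : Fin 2 → ℂ => (ζ 0 * (ζ 0 * ζ 1)) • W21 := by
      funext ζ; congr 1; ring
    rw [e]; exact base
  have h8 : HasFDerivAt (fun ζ : Fin 2 → ℂ => (ζ 0 * ζ 1 ^ 2) • W12)
      (0 : (Fin 2 → ℂ) →L[ℂ] ℂ × ℂ) 0 := by
    have base := zero_quad p1 (p0.mul p1) (by simp) (by simp) W12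
    have e : (fun ζ : Fin 2 → ℂ => (ζ 0 * ζ 1 ^ 2) • W12) =
        fun ζ : Fin 2 → ℂ => (ζ 1 * (ζ 0 * ζ 1)) • W12 := by
      funext ζ; congr 1; ring
    rw [e]; exact base
  have h9 : HasFDerivAt (fun ζ : Fin 2 → ℂ => (ζ 0 ^ 2 * ζ 1 ^ 2) • W22)
      (0 : (Fin 2 → ℂ) →L[ℂ] ℂ × ℂ) 0 := by
    have base := zero_quad (p0.mul p1) (p0.mul p1) (by simp) (by simp) W22
    have e : (fun ζ : Fin 2 → ℂ => (ζ 0 ^ 2 * ζ 1 ^ 2) • W22) =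
        fun ζ : Fin 2 → ℂ => ((ζ 0 * ζ 1) * (ζ 0 * ζ 1)) • W22 := by
      funext ζ; congr 1; ring
    rw [e]; exact base
  have hsum := ((((((((h1.add h2).add h3).add h4).add h5).add h6).add h7).add h8).add h9)
  have hW10 : W10 = (∫ s in (0:ℝ)..1, a s * g₀ s * f s,
      2 * ∫ s in (0:ℝ)..1, a s * g₀ s * (f s) ^ 2) := by
    rw [hW10def, pair_integral (cOn_int ((hac.fun_mul hg₀c).fun_mul hf))
      (cOn_int (continuousOn_const.fun_mul ((hac.fun_mul hg₀c).fun_mul (hf.fun_pow 2)))),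
      intervalIntegral.integral_const_mul]
  have hW01 : W01 = (∫ s in (0:ℝ)..1, a s * g₁ s * f s,
      2 * ∫ s in (0:ℝ)..1, a s * g₁ s * (f s) ^ 2) := by
    rw [hW01def, pair_integral (cOn_int ((hac.fun_mul hg₁c).fun_mul hf))
      (cOn_int (continuousOn_const.fun_mul ((hac.fun_mul hg₁c).fun_mul (hf.fun_pow 2)))),
      intervalIntegral.integral_const_mul]
  refine hsum.congr_fderiv ?_
  rw [hW10, hW01]
  simp

/-- Lemma 6.5 of the paper: period dominating multipliers for the map
`s ↦ a(s)(f(s), f(s)²)`. Here `I' = [c,d]` is a nontrivial closed subinterval of `[0,1]`,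
`f` is not constant on `I'`, and `a` vanishes nowhere. -/
theorem stmt_7
    (c d : ℝ) (hc : 0 ≤ c) (hcd : c < d) (hd : d ≤ 1)
    (f a : ℝ → ℂ)
    (hf : ContinuousOn f (Icc (0:ℝ) 1))
    (hac : ContinuousOn a (Icc (0:ℝ) 1))
    (ha0 : ∀ s ∈ Icc (0:ℝ) 1, a s ≠ 0)
    (hnc : ∃ s₁ ∈ Icc c d, ∃ s₂ ∈ Icc c d, f s₁ ≠ f s₂) :
    ∃ N : ℕ, 2 ≤ N ∧ ∃ g : Fin N → ℝ → ℂ,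
      (∀ i, ContinuousOn (g i) (Icc (0:ℝ) 1)) ∧
      (∀ i, ∀ s ∈ Icc (0:ℝ) 1 \ Icc c d, g i s = 0) ∧
      ∃ D : (Fin N → ℂ) →L[ℂ] (ℂ × ℂ),
        HasFDerivAt
          (fun ζ : Fin N → ℂ =>
            ∫ s in (0:ℝ)..1,
              (a s * (∏ i, (1 + ζ i * g i s)) * f s,
               a s * (∏ i, (1 + ζ i * g i s)) ^ 2 * (f s) ^ 2)) D 0 ∧
        Function.Surjective D := by
  obtain ⟨g₀, g₁, ⟨hg₀c, hg₀0⟩, ⟨hg₁c, hg₁0⟩, hΔ⟩ :=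
    exists_indep c d hc hcd hd f a hf hac ha0 hnc
  refine ⟨2, le_refl 2, ![g₀, g₁], ?_, ?_, ?_⟩
  · intro i
    fin_cases i
    · simpa using hg₀c
    · simpa using hg₁c
  · intro i s hs
    fin_cases i <;> simp [hg₀0 s hs, hg₁0 s hs]
  · refine ⟨(ContinuousLinearMap.proj 0 : (Fin 2 → ℂ) →L[ℂ] ℂ).smulRight
        ((∫ s in (0:ℝ)..1, a s * g₀ s * f s, 2 * ∫ s in (0:ℝ)..1, a s * g₀ s * (f s) ^ 2)) +
      (ContinuousLinearMap.proj 1 : (Fin 2 → ℂ) →L[ℂ] ℂ).smulRight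
        ((∫ s in (0:ℝ)..1, a s * g₁ s * f s, 2 * ∫ s in (0:ℝ)..1, a s * g₁ s * (f s) ^ 2)),
      derivComp2 f a g₀ g₁ hf hac hg₀c hg₁c, ?_⟩
    set x₀ := ∫ s in (0:ℝ)..1, a s * g₀ s * f s
    set x₁ := ∫ s in (0:ℝ)..1, a s * g₁ s * f s
    set y₀ := ∫ s in (0:ℝ)..1, a s * g₀ s * (f s) ^ 2
    set y₁ := ∫ s in (0:ℝ)..1, a s * g₁ s * (f s) ^ 2
    rintro ⟨p, q⟩
    have hΔ' : x₀ * y₁ - x₁ * y₀ ≠ 0 := hΔ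
    refine ⟨![(p * y₁ - q / 2 * x₁) / (x₀ * y₁ - x₁ * y₀),
              (q / 2 * x₀ - p * y₀) / (x₀ * y₁ - x₁ * y₀)], ?_⟩
    simp only [ContinuousLinearMap.add_apply, ContinuousLinearMap.smulRight_apply,
      ContinuousLinearMap.proj_apply, Matrix.cons_val_zero, Matrix.cons_val_one,
      Matrix.head_cons, Prod.smul_mk, smul_eq_mul, Prod.mk_add_mk, Prod.mk.injEq]
    constructor
    · field_simp
      have hD : y₁ * x₀ - x₁ * y₀ ≠ 0 := by rwa [mul_comm y₁ x₀]
      linear_combination (2 * p) * mul_inv_cancel₀ hD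
    · field_simp
      have hD : y₁ * x₀ - x₁ * y₀ ≠ 0 := by rwa [mul_comm y₁ x₀]
      linear_combination q * mul_inv_cancel₀ hD
end

section
/- Let f : [0,1] → ℂ and a : [0,1] → ℂ \ {0} be continuous functions with f nonconstant, and let x₁, x₂ ∈ ℂ. Then there exists a continuous function h : [0,1] → ℂ \ {0} such that h(0) = h(1) = 1 and ∫₀¹ a(s) (h(s) f(s), h(s)² f(s)²) ds = (x₁, x₂). -/
open MeasureTheory Set intervalIntegral Topology Filter


/-- points avoiding the slit `(-∞,-1]` -/
def goodc (z : ℂ) : Prop := ¬(z.im = 0 ∧ z.re ≤ -1)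

lemma isOpen_goodc : IsOpen {z : ℂ | goodc z} := by
  have h : IsClosed {z : ℂ | z.im = 0 ∧ z.re ≤ -1} :=
    (isClosed_eq Complex.continuous_im continuous_const).inter
      (isClosed_le Complex.continuous_re continuous_const)
  have : {z : ℂ | goodc z} = {z : ℂ | z.im = 0 ∧ z.re ≤ -1}ᶜ := rfl
  rw [this]; exact h.isOpen_compl

lemma exists_goodc_near (w : ℂ) {ρ : ℝ} (hρ : 0 < ρ) :
    ∃ z ∈ Metric.ball w ρ, goodc z := by
  have hmem : ∀ t : ℝ, |t| < ρ → w + t * Complex.I ∈ Metric.ball w ρ := by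
    intro t ht
    rw [Metric.mem_ball, dist_eq_norm, show w + t * Complex.I - w = (t:ℂ) * Complex.I by ring]
    simpa using ht
  by_cases h : w.im + ρ/2 = 0
  · refine ⟨w - (ρ/2) * Complex.I, ?_, ?_⟩
    · have := hmem (-(ρ/2)) (by rw [abs_neg, abs_of_pos (by linarith)]; linarith)
      simpa [sub_eq_add_neg, neg_mul] using this
    · intro hc
      have : (w - (ρ/2) * Complex.I).im = w.im - ρ/2 := by simp
      have h2 : w.im - ρ/2 = 0 := by rw [← this]; exact hc.1
      linarith
  · have hb : |ρ/2| < ρ := by rw [abs_of_pos (by linarith : (0:ℝ) < ρ/2)]; linarith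
    refine ⟨w + ((ρ/2 : ℝ) : ℂ) * Complex.I, hmem (ρ/2) hb, ?_⟩
    intro hc
    have : (w + ((ρ/2:ℝ):ℂ) * Complex.I).im = w.im + ρ/2 := by simp
    exact h (by rw [← this]; exact hc.1)

lemma quad_coeffs_zero {P₂ P₁ P₀ t₁ t₂ t₃ : ℂ} (h12 : t₁ ≠ t₂) (h13 : t₁ ≠ t₃)
    (h23 : t₂ ≠ t₃) (e₁ : P₂*t₁^2 + P₁*t₁ + P₀ = 0) (e₂ : P₂*t₂^2 + P₁*t₂ + P₀ = 0)
    (e₃ : P₂*t₃^2 + P₁*t₃ + P₀ = 0) : P₂ = 0 ∧ P₁ = 0 ∧ P₀ = 0 := by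
  have d12 : P₂*(t₁+t₂) + P₁ = 0 := by
    have h : (t₁ - t₂) * (P₂*(t₁+t₂) + P₁) = 0 := by linear_combination e₁ - e₂
    rcases mul_eq_zero.1 h with h | h
    · exact absurd (sub_eq_zero.1 h) h12
    · exact h
  have d13 : P₂*(t₁+t₃) + P₁ = 0 := by
    have h : (t₁ - t₃) * (P₂*(t₁+t₃) + P₁) = 0 := by linear_combination e₁ - e₃
    rcases mul_eq_zero.1 h with h | h
    · exact absurd (sub_eq_zero.1 h) h13
    · exact h
  have hP2 : P₂ = 0 := by
    have h : (t₂ - t₃) * P₂ = 0 := by linear_combination d12 - d13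
    rcases mul_eq_zero.1 h with h | h
    · exact absurd (sub_eq_zero.1 h) h23
    · exact h
  have hP1 : P₁ = 0 := by linear_combination d12 - (t₁+t₂)*hP2
  exact ⟨hP2, hP1, by linear_combination e₁ - t₁^2*hP2 - t₁*hP1⟩


noncomputable def tri (δ c s : ℝ) : ℝ := max 0 (1 - |s - c|/δ)

lemma tri_continuous (δ c : ℝ) : Continuous (tri δ c) := by
  unfold tri; fun_prop

lemma tri_nonneg (δ c s : ℝ) : 0 ≤ tri δ c s := le_max_left _ _

lemma tri_le_one {δ : ℝ} (hδ : 0 < δ) (c s : ℝ) : tri δ c s ≤ 1 := by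
  unfold tri
  apply max_le (by norm_num)
  have : 0 ≤ |s - c|/δ := by positivity
  linarith

lemma tri_eq_zero {δ c s : ℝ} (hδ : 0 < δ) (h : δ ≤ |s - c|) : tri δ c s = 0 := by
  unfold tri
  apply max_eq_left
  rw [sub_nonpos, le_div_iff₀ hδ]
  linarith

lemma tri_pos {δ c s : ℝ} (hδ : 0 < δ) (h : |s - c| < δ) : 0 < tri δ c s := by
  unfold tri
  rw [lt_max_iff]
  right
  rw [sub_pos, div_lt_one hδ]
  exact h

lemma tri_support {δ c s : ℝ} (hδ : 0 < δ) (h : tri δ c s ≠ 0) : |s - c| < δ := by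
  by_contra hc
  exact h (tri_eq_zero hδ (not_lt.mp hc))

lemma tri_pow_integrable {δ c : ℝ} (n : ℕ) (a b : ℝ) :
    IntervalIntegrable (fun s => (tri δ c s)^n) volume a b :=
  (((tri_continuous δ c).pow n).continuousOn).intervalIntegrable

lemma tri_pow_integral {δ c : ℝ} (n : ℕ) (hn : n ≠ 0) (hδ : 0 < δ)
    (hc1 : δ ≤ c) (hc2 : c + δ ≤ 1) :
    ∫ s in (0:ℝ)..1, (tri δ c s)^n = ∫ s in (-δ)..δ, (tri δ 0 s)^n := by
  have key : ∀ s, tri δ c s = tri δ 0 (s - c) := by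
    intro s; unfold tri; rw [sub_zero]
  have h1 : ∫ s in (0:ℝ)..(c-δ), (tri δ c s)^n = 0 := by
    have heq : EqOn (fun s => (tri δ c s)^n) (fun _ => (0:ℝ)) (uIcc 0 (c-δ)) := by
      intro s hs
      rw [uIcc_of_le (by linarith)] at hs
      have hd : δ ≤ |s - c| := by
        rw [abs_sub_comm, abs_of_nonneg (by linarith [hs.2])]
        linarith [hs.2]
      simp [tri_eq_zero hδ hd, zero_pow hn]
    rw [intervalIntegral.integral_congr heq]
    simp
  have h2 : ∫ s in (c+δ)..1, (tri δ c s)^n = 0 := by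
    have heq : EqOn (fun s => (tri δ c s)^n) (fun _ => (0:ℝ)) (uIcc (c+δ) 1) := by
      intro s hs
      rw [uIcc_of_le (by linarith)] at hs
      have hd : δ ≤ |s - c| := by
        rw [abs_of_nonneg (by linarith [hs.1])]
        linarith [hs.1]
      simp [tri_eq_zero hδ hd, zero_pow hn]
    rw [intervalIntegral.integral_congr heq]
    simp
  have hmid : ∫ s in (c-δ)..(c+δ), (tri δ c s)^n = ∫ s in (-δ)..δ, (tri δ 0 s)^n := by
    have : ∫ s in (c-δ)..(c+δ), (tri δ c s)^n
        = ∫ s in (c-δ)..(c+δ), (fun u => (tri δ 0 u)^n) (s - c) := by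
      apply intervalIntegral.integral_congr
      intro s _
      simp [key s]
    rw [this, intervalIntegral.integral_comp_sub_right (fun u => (tri δ 0 u)^n) c]
    norm_num
  have e1 := intervalIntegral.integral_add_adjacent_intervals
    (tri_pow_integrable (δ:=δ) (c:=c) n 0 (c-δ)) (tri_pow_integrable n (c-δ) 1)
  have e2 := intervalIntegral.integral_add_adjacent_intervals
    (tri_pow_integrable (δ:=δ) (c:=c) n (c-δ) (c+δ)) (tri_pow_integrable n (c+δ) 1)
  rw [← e1, ← e2, h1, h2, hmid]
  ring

lemma tri_pow_integral_pos {δ : ℝ} (n : ℕ) (hn : n ≠ 0) (hδ : 0 < δ) :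
    0 < ∫ s in (-δ)..δ, (tri δ 0 s)^n := by
  apply intervalIntegral_pos_of_pos_on (tri_pow_integrable n _ _)
  · intro s hs
    have : |s - 0| < δ := by
      rw [sub_zero, abs_lt]; exact ⟨hs.1, hs.2⟩
    exact pow_pos (tri_pos hδ this) n
  · linarith

-- closeness estimate
lemma tri_est (G : ℝ → ℂ) (hG : ContinuousOn G (Icc 0 1)) (w : ℂ) {ε δ : ℝ} (c : ℝ)
    (hδ : 0 < δ) (hε : 0 ≤ ε)
    (hclose : ∀ s ∈ Icc (0:ℝ) 1, |s - c| ≤ δ → ‖G s - w‖ ≤ ε) (n : ℕ) (hn : n ≠ 0) :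
    ‖(∫ s in (0:ℝ)..1, G s * (((tri δ c s)^n : ℝ):ℂ))
        - w * ((∫ s in (0:ℝ)..1, (tri δ c s)^n : ℝ) : ℂ)‖
      ≤ ε * (∫ s in (0:ℝ)..1, (tri δ c s)^n) := by
  have htriC : Continuous fun s => (((tri δ c s)^n : ℝ):ℂ) := by
    exact Complex.continuous_ofReal.comp ((tri_continuous δ c).pow n)
  have hGi : IntervalIntegrable (fun s => G s * (((tri δ c s)^n : ℝ):ℂ)) volume 0 1 :=
    (hG.mul htriC.continuousOn).intervalIntegrable_of_Icc zero_le_one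
  have hwi : IntervalIntegrable (fun s => w * (((tri δ c s)^n : ℝ):ℂ)) volume 0 1 :=
    (continuous_const.mul htriC).intervalIntegrable _ _
  have hw : w * ((∫ s in (0:ℝ)..1, (tri δ c s)^n : ℝ) : ℂ)
      = ∫ s in (0:ℝ)..1, w * (((tri δ c s)^n : ℝ):ℂ) := by
    rw [intervalIntegral.integral_const_mul, intervalIntegral.integral_ofReal]
  rw [hw, ← intervalIntegral.integral_sub hGi hwi]
  have hbound : ∀ t ∈ Set.uIoc (0:ℝ) 1,
      ‖G t * (((tri δ c t)^n : ℝ):ℂ) - w * (((tri δ c t)^n : ℝ):ℂ)‖ ≤ ε * (tri δ c t)^n := by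
    intro t ht
    rw [Set.mem_uIoc] at ht
    have htIcc : t ∈ Icc (0:ℝ) 1 := by
      rcases ht with h | h
      · exact ⟨h.1.le, h.2⟩
      · constructor <;> linarith [h.1, h.2]
    rw [show G t * (((tri δ c t)^n : ℝ):ℂ) - w * (((tri δ c t)^n : ℝ):ℂ)
        = (G t - w) * (((tri δ c t)^n : ℝ):ℂ) by ring]
    rw [norm_mul, Complex.norm_real, Real.norm_eq_abs,
      abs_of_nonneg (pow_nonneg (tri_nonneg δ c t) n)]
    by_cases hz : tri δ c t = 0
    · rw [hz, zero_pow hn]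
      simp
    · have := tri_support hδ hz
      exact mul_le_mul_of_nonneg_right (hclose t htIcc this.le)
        (pow_nonneg (tri_nonneg δ c t) n)
  have habs : |∫ s in (0:ℝ)..1, ε * (tri δ c s)^n| = ∫ s in (0:ℝ)..1, ε * (tri δ c s)^n := by
    apply abs_of_nonneg
    apply intervalIntegral.integral_nonneg zero_le_one
    intro u _
    exact mul_nonneg hε (pow_nonneg (tri_nonneg δ c u) n)
  calc ‖∫ s in (0:ℝ)..1, (G s * (((tri δ c s)^n : ℝ):ℂ) - w * (((tri δ c s)^n : ℝ):ℂ))‖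
      ≤ |∫ s in (0:ℝ)..1, ε * (tri δ c s)^n| := by
        apply intervalIntegral.norm_integral_le_abs_of_norm_le
        · exact (MeasureTheory.ae_restrict_iff' measurableSet_uIoc).2 (.of_forall hbound)
        · exact (continuous_const.mul ((tri_continuous δ c).pow n)).intervalIntegrable _ _
    _ = ∫ s in (0:ℝ)..1, ε * (tri δ c s)^n := habs
    _ = ε * ∫ s in (0:ℝ)..1, (tri δ c s)^n := intervalIntegral.integral_const_mul _ _

-- norm helper lemmas
lemma near_ne_zero {x p : ℂ} {k : ℝ} (hp : p ≠ 0) (hk : k < 1) (h : ‖x - p‖ ≤ k*‖p‖) :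
    x ≠ 0 := by
  intro hx
  rw [hx, zero_sub, norm_neg] at h
  have hp' : 0 < ‖p‖ := norm_pos_iff.mpr hp
  nlinarith

lemma near_mul {x y p q : ℂ} {k : ℝ} (hk0 : 0 ≤ k) (hk : k ≤ 1)
    (hx : ‖x - p‖ ≤ k*‖p‖) (hy : ‖y - q‖ ≤ k*‖q‖) : ‖x*y - p*q‖ ≤ 3*k*‖p*q‖ := by
  have hyq : ‖y‖ ≤ 2*‖q‖ := by
    calc ‖y‖ = ‖q + (y - q)‖ := by ring_nf
    _ ≤ ‖q‖ + ‖y - q‖ := norm_add_le _ _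
    _ ≤ ‖q‖ + k*‖q‖ := by linarith
    _ ≤ 2*‖q‖ := by nlinarith [norm_nonneg q]
  calc ‖x*y - p*q‖ = ‖(x - p)*y + p*(y - q)‖ := by ring_nf
  _ ≤ ‖(x-p)*y‖ + ‖p*(y-q)‖ := norm_add_le _ _
  _ = ‖x-p‖*‖y‖ + ‖p‖*‖y-q‖ := by rw [norm_mul, norm_mul]
  _ ≤ (k*‖p‖)*(2*‖q‖) + ‖p‖*(k*‖q‖) := by
      apply add_le_add
      · exact mul_le_mul hx hyq (norm_nonneg _) (by positivity)
      · exact mul_le_mul_of_nonneg_left hy (norm_nonneg _)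
  _ = 3*k*(‖p‖*‖q‖) := by ring
  _ = 3*k*‖p*q‖ := by rw [norm_mul]

lemma near_sum_ne {x y T : ℂ} (hT : T ≠ 0)
    (hx : ‖x - T‖ ≤ (9/16)*‖T‖) (hy : ‖y - T‖ ≤ (9/16)*‖T‖) : x + y ≠ 0 := by
  intro h0
  have h1 : ‖x + y - 2*T‖ ≤ (9/8)*‖T‖ := by
    calc ‖x + y - 2*T‖ = ‖(x - T) + (y - T)‖ := by ring_nf
    _ ≤ ‖x - T‖ + ‖y - T‖ := norm_add_le _ _
    _ ≤ (9/8)*‖T‖ := by linarith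
  rw [h0, zero_sub, norm_neg] at h1
  have h2 : ‖(2:ℂ)*T‖ = 2*‖T‖ := by rw [norm_mul]; norm_num
  have hp : 0 < ‖T‖ := norm_pos_iff.mpr hT
  rw [h2] at h1
  nlinarith


lemma exists_interior_ne_zero (f : ℝ → ℂ) (hf : ContinuousOn f (Icc 0 1))
    (hnc : ∃ s₁ ∈ Icc (0:ℝ) 1, ∃ s₂ ∈ Icc (0:ℝ) 1, f s₁ ≠ f s₂) :
    ∃ s₀ ∈ Ioo (0:ℝ) 1, f s₀ ≠ 0 := by
  by_contra hcon
  push_neg at hcon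
  have hzero : ∀ s ∈ Icc (0:ℝ) 1, f s = 0 := by
    intro s hs
    rcases eq_or_lt_of_le hs.1 with h0 | h0
    · -- s = 0
      subst h0
      have hne : (𝓝[Ioo (0:ℝ) 1] (0:ℝ)).NeBot := by
        rw [← mem_closure_iff_nhdsWithin_neBot, closure_Ioo one_ne_zero.symm]
        exact ⟨le_refl 0, zero_le_one⟩
      have ht1 : Filter.Tendsto f (𝓝[Ioo (0:ℝ) 1] (0:ℝ)) (nhds (f 0)) :=
        (hf 0 hs).mono_left (nhdsWithin_mono _ Ioo_subset_Icc_self)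
      have ht2 : Filter.Tendsto f (𝓝[Ioo (0:ℝ) 1] (0:ℝ)) (nhds 0) := by
        apply Filter.Tendsto.congr' _ tendsto_const_nhds
        filter_upwards [self_mem_nhdsWithin] with x hx
        exact (hcon x hx).symm
      exact tendsto_nhds_unique ht1 ht2
    rcases eq_or_lt_of_le hs.2 with h1 | h1
    · -- s = 1
      subst h1
      have hne : (𝓝[Ioo (0:ℝ) 1] (1:ℝ)).NeBot := by
        rw [← mem_closure_iff_nhdsWithin_neBot, closure_Ioo one_ne_zero.symm]
        exact ⟨zero_le_one, le_refl 1⟩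
      have ht1 : Filter.Tendsto f (𝓝[Ioo (0:ℝ) 1] (1:ℝ)) (nhds (f 1)) :=
        (hf 1 hs).mono_left (nhdsWithin_mono _ Ioo_subset_Icc_self)
      have ht2 : Filter.Tendsto f (𝓝[Ioo (0:ℝ) 1] (1:ℝ)) (nhds 0) := by
        apply Filter.Tendsto.congr' _ tendsto_const_nhds
        filter_upwards [self_mem_nhdsWithin] with x hx
        exact (hcon x hx).symm
      exact tendsto_nhds_unique ht1 ht2
    · exact hcon s ⟨h0, h1⟩
  obtain ⟨s₁, hs₁, s₂, hs₂, hne⟩ := hnc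
  exact hne ((hzero s₁ hs₁).trans (hzero s₂ hs₂).symm)


set_option maxHeartbeats 1000000 in
lemma core (A₁ A₂ A₃ B₁ B₂ B₃ C₁ C₂ C₃ c₁ c₂ : ℂ)
    (hA₁ : A₁ ≠ 0) (hA₃ : A₃ ≠ 0)
    (hL : C₂*A₁^2 + C₁*A₂^2 ≠ 0)
    (hK : C₃*A₁^2 + C₁*A₃^2 ≠ 0)
    (hG : C₂*A₃^2 + C₃*A₂^2 ≠ 0) :
    ∃ α β γ : ℂ, goodc α ∧ goodc β ∧ goodc γ ∧
      A₁*α + A₂*β + A₃*γ = c₁ ∧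
      2*(B₁*α + B₂*β + B₃*γ) + C₁*α^2 + C₂*β^2 + C₃*γ^2 = c₂ := by
  set K2 : ℂ := C₃*A₁^2 + C₁*A₃^2 with hK2def
  set L : ℂ := C₂*A₁^2 + C₁*A₂^2 with hLdef
  set bb : ℂ → ℂ := fun β => 2*C₁*A₂*A₃*β + (2*B₃*A₁^2 - 2*B₁*A₁*A₃ - 2*C₁*A₃*c₁) with hbb
  set cc : ℂ → ℂ := fun β =>
    L*β^2 + (2*B₂*A₁^2 - 2*B₁*A₁*A₂ - 2*C₁*A₂*c₁)*β + (2*B₁*A₁*c₁ + C₁*c₁^2 - c₂*A₁^2) with hcc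
  have hbbcont : Continuous bb := by rw [hbb]; fun_prop
  have hcccont : Continuous cc := by rw [hcc]; fun_prop
  have hbban : ∀ x, AnalyticAt ℂ bb x := by
    intro x; rw [hbb]; exact (analyticAt_const.mul analyticAt_id).add analyticAt_const
  -- conversion: a root of the γ-quadratic gives a solution of the system
  have hsolve : ∀ β γ : ℂ, K2*γ^2 + bb β*γ + cc β = 0 →
      (A₁*((c₁ - A₂*β - A₃*γ)/A₁) + A₂*β + A₃*γ = c₁ ∧
       2*(B₁*((c₁ - A₂*β - A₃*γ)/A₁) + B₂*β + B₃*γ) +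
         C₁*((c₁ - A₂*β - A₃*γ)/A₁)^2 + C₂*β^2 + C₃*γ^2 = c₂) := by
    intro β γ hroot
    have hα : A₁*((c₁ - A₂*β - A₃*γ)/A₁) = c₁ - A₂*β - A₃*γ := by field_simp
    constructor
    · rw [hα]; ring
    · apply mul_left_cancel₀ (pow_ne_zero 2 hA₁)
      simp only [hbb, hcc, hLdef, hK2def] at hroot
      linear_combination hroot +
        (2*B₁*A₁ + C₁*(A₁*((c₁ - A₂*β - A₃*γ)/A₁) + (c₁ - A₂*β - A₃*γ)))*hα
  -- Step A: find β₀ good with Im(cc β₀ / K2) ≠ 0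
  obtain ⟨z, hz1, hz2⟩ : ∃ z : ℂ, (∀ t : ℝ, 0 < t → t < 1 →
      ¬((((t:ℂ))*z).im = 0 ∧ (((t:ℂ))*z).re ≤ -1)) ∧ ((L*z^2) * K2⁻¹).im ≠ 0 := by
    by_cases him : (L * K2⁻¹).im ≠ 0
    · refine ⟨1, fun t ht0 ht1 => ?_, by simpa using him⟩
      rintro ⟨h1, h2⟩
      simp at h2; linarith
    · push_neg at him
      refine ⟨1 + Complex.I, fun t ht0 ht1 => ?_, ?_⟩
      · rintro ⟨h1, -⟩
        simp [Complex.mul_im] at h1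
        linarith
      · have hne : L * K2⁻¹ ≠ 0 := mul_ne_zero hL (inv_ne_zero hK)
        have hre : (L * K2⁻¹).re ≠ 0 := fun h => hne (Complex.ext h him)
        have heq : ((L*(1+Complex.I)^2) * K2⁻¹).im = 2*(L * K2⁻¹).re := by
          have h9 : (L*(1+Complex.I)^2) * K2⁻¹ = (2*Complex.I) * (L * K2⁻¹) := by
            ring_nf; rw [Complex.I_sq]; ring
          rw [h9]
          simp [Complex.mul_im, Complex.mul_re]
        rw [heq]
        simpa using hre
  obtain ⟨β₀', hgood₀', hcc₀'⟩ : ∃ β₀ : ℂ, goodc β₀ ∧ (cc β₀ * K2⁻¹).im ≠ 0 := by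
    by_cases c2 : (cc ((1/2:ℂ)*z) * K2⁻¹).im = 0
    · by_cases c3 : (cc ((1/3:ℂ)*z) * K2⁻¹).im = 0
      · by_cases c4 : (cc ((1/4:ℂ)*z) * K2⁻¹).im = 0
        · exfalso
          have comb : (24:ℂ)*(cc ((1/2:ℂ)*z)*K2⁻¹) - 72*(cc ((1/3:ℂ)*z)*K2⁻¹)
              + 48*(cc ((1/4:ℂ)*z)*K2⁻¹) = (L*z^2)*K2⁻¹ := by
            simp only [hcc]; ring
          apply hz2
          rw [← comb]
          simp only [Complex.add_im, Complex.sub_im, Complex.mul_im,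
            Complex.re_ofNat, Complex.im_ofNat, c2, c3, c4]
          ring
        · refine ⟨(1/4:ℂ)*z, ?_, c4⟩
          have := hz1 (1/4) (by norm_num) (by norm_num)
          simpa [goodc] using this
      · refine ⟨(1/3:ℂ)*z, ?_, c3⟩
        have := hz1 (1/3) (by norm_num) (by norm_num)
        simpa [goodc] using this
    · refine ⟨(1/2:ℂ)*z, ?_, c2⟩
      have := hz1 (1/2) (by norm_num) (by norm_num)
      simpa [goodc] using this
  -- the discriminant
  set D : ℂ → ℂ := fun β => (bb β)^2 - 4*K2*cc β with hD
  have hDcont : Continuous D := by rw [hD]; fun_prop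
  -- Step B: upgrade β₀ to have D β₀ ≠ 0, unless D ≡ 0
  obtain ⟨β₀, hgood₀, hcc₀, hDβ₀⟩ :
      ∃ β₀ : ℂ, goodc β₀ ∧ (cc β₀ * K2⁻¹).im ≠ 0 ∧ ((∀ β, D β = 0) ∨ D β₀ ≠ 0) := by
    by_cases hDall : ∀ β, D β = 0
    · exact ⟨β₀', hgood₀', hcc₀', Or.inl hDall⟩
    · have hOopen : IsOpen {β : ℂ | goodc β ∧ (cc β * K2⁻¹).im ≠ 0} := by
        apply IsOpen.inter isOpen_goodc
        exact isOpen_compl_singleton.preimage (Complex.continuous_im.comp (hcccont.mul continuous_const))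
      obtain ⟨r, hr0, hball⟩ := Metric.isOpen_iff.mp hOopen β₀' ⟨hgood₀', hcc₀'⟩
      set t1 : ℂ := β₀' + ((r/2 : ℝ) : ℂ) with ht1
      set t2 : ℂ := β₀' + ((r/3 : ℝ) : ℂ) with ht2
      set t3 : ℂ := β₀' + ((r/4 : ℝ) : ℂ) with ht3
      have hmem : ∀ k : ℝ, 2 ≤ k → β₀' + ((r/k : ℝ) : ℂ) ∈ Metric.ball β₀' r := by
        intro k hk
        rw [Metric.mem_ball, dist_eq_norm, add_sub_cancel_left]
        rw [Complex.norm_real, Real.norm_eq_abs, abs_of_pos (by positivity)]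
        rw [div_lt_iff₀ (by linarith)]
        nlinarith
      by_cases hd1 : D t1 = 0
      · by_cases hd2 : D t2 = 0
        · by_cases hd3 : D t3 = 0
          · exfalso
            apply hDall
            have hrne : (r:ℂ) ≠ 0 := by exact_mod_cast hr0.ne'
            have h12 : t1 ≠ t2 := by
              rw [ht1, ht2]; intro h
              have := add_left_cancel h
              rw [Complex.ofReal_inj] at this
              have : r/2 = r/3 := this
              nlinarith
            have h13 : t1 ≠ t3 := by
              rw [ht1, ht3]; intro h
              have := add_left_cancel h
              rw [Complex.ofReal_inj] at this
              have : r/2 = r/4 := this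
              nlinarith
            have h23 : t2 ≠ t3 := by
              rw [ht2, ht3]; intro h
              have := add_left_cancel h
              rw [Complex.ofReal_inj] at this
              have : r/3 = r/4 := this
              nlinarith
            set P2 : ℂ := (2*C₁*A₂*A₃)^2 - 4*K2*L with hP2
            set P1 : ℂ := 2*(2*C₁*A₂*A₃)*(2*B₃*A₁^2 - 2*B₁*A₁*A₃ - 2*C₁*A₃*c₁)
              - 4*K2*(2*B₂*A₁^2 - 2*B₁*A₁*A₂ - 2*C₁*A₂*c₁) with hP1
            set P0 : ℂ := (2*B₃*A₁^2 - 2*B₁*A₁*A₃ - 2*C₁*A₃*c₁)^2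
              - 4*K2*(2*B₁*A₁*c₁ + C₁*c₁^2 - c₂*A₁^2) with hP0
            have key : ∀ t : ℂ, D t = P2*t^2 + P1*t + P0 := by
              intro t
              simp only [hD, hbb, hcc, hP2, hP1, hP0]
              ring
            rw [key] at hd1 hd2 hd3
            obtain ⟨e2, e1, e0⟩ := quad_coeffs_zero h12 h13 h23 hd1 hd2 hd3
            intro β
            rw [key]
            rw [e2, e1, e0]
            ring
          · exact ⟨t3, (hball (hmem 4 (by norm_num))).1, (hball (hmem 4 (by norm_num))).2,
              Or.inr hd3⟩
        · exact ⟨t2, (hball (hmem 3 (by norm_num))).1, (hball (hmem 3 (by norm_num))).2,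
            Or.inr hd2⟩
      · exact ⟨t1, (hball (hmem 2 (by norm_num))).1, (hball (hmem 2 (by norm_num))).2,
          Or.inr hd1⟩

  -- Step C: roots at β₀
  have hK2ne : K2 ≠ 0 := hK
  obtain ⟨s, hs⟩ : ∃ s : ℂ, s^2 = D β₀ := IsAlgClosed.exists_pow_nat_eq (D β₀) (by norm_num)
  have hs' : s^2 = (bb β₀)^2 - 4*K2*cc β₀ := by rw [hs, hD]
  obtain ⟨γ₀, hγ₀im, hγ₀root⟩ : ∃ γ₀ : ℂ, γ₀.im ≠ 0 ∧ K2*γ₀^2 + bb β₀*γ₀ + cc β₀ = 0 := by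
    set γp : ℂ := (-bb β₀ + s)/(2*K2) with hγp
    set γm : ℂ := (-bb β₀ - s)/(2*K2) with hγm
    have hprod : γp * γm = cc β₀ * K2⁻¹ := by
      have hK' : K2 * K2⁻¹ = 1 := mul_inv_cancel₀ hK2ne
      rw [hγp, hγm, div_eq_mul_inv, div_eq_mul_inv, mul_inv]; linear_combination (-(K2⁻¹)^2/4)*hs' + (cc β₀ * K2⁻¹)*hK'
    have hor : γp.im ≠ 0 ∨ γm.im ≠ 0 := by
      by_contra hcon
      push_neg at hcon
      apply hcc₀
      rw [← hprod]
      simp [Complex.mul_im, hcon.1, hcon.2]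
    have hrp : K2*γp^2 + bb β₀*γp + cc β₀ = 0 := by
      rw [hγp]
      have h2K : 2*K2*((-bb β₀ + s)/(2*K2)) + bb β₀ = s := by field_simp; ring
      apply mul_left_cancel₀ (show (4:ℂ)*K2 ≠ 0 by simp [hK2ne])
      linear_combination (2*K2*((-bb β₀ + s)/(2*K2)) + bb β₀ + s)*h2K + hs'
    have hrm : K2*γm^2 + bb β₀*γm + cc β₀ = 0 := by
      rw [hγm]
      have h2K : 2*K2*((-bb β₀ - s)/(2*K2)) + bb β₀ = -s := by field_simp; ring
      apply mul_left_cancel₀ (show (4:ℂ)*K2 ≠ 0 by simp [hK2ne])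
      linear_combination (2*K2*((-bb β₀ - s)/(2*K2)) + bb β₀ + (-s))*h2K + hs'
    rcases hor with h | h
    · exact ⟨γp, h, hrp⟩
    · exact ⟨γm, h, hrm⟩
  -- Step D: analytic local branch γfun through γ₀
  obtain ⟨γfun, hγan, hγβ₀, U, hUopen, hmemU, hroot⟩ :
      ∃ γfun : ℂ → ℂ, AnalyticAt ℂ γfun β₀ ∧ γfun β₀ = γ₀ ∧
        ∃ U : Set ℂ, IsOpen U ∧ β₀ ∈ U ∧
          ∀ β ∈ U, K2*(γfun β)^2 + bb β*(γfun β) + cc β = 0 := by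
    rcases hDβ₀ with hDall | hDne
    · -- degenerate: D ≡ 0, double root, affine branch
      have hz : 2*K2*γ₀ + bb β₀ = 0 := by
        have hsq : (2*K2*γ₀ + bb β₀)^2 = 0 := by
          have hDb : (bb β₀)^2 - 4*K2*cc β₀ = 0 := by
            have := hDall β₀; rw [hD] at this; exact this
          linear_combination 4*K2*hγ₀root + hDb
        exact pow_eq_zero_iff (by norm_num) |>.mp hsq
      refine ⟨fun β => -bb β * (2*K2)⁻¹, ((hbban β₀).neg.mul analyticAt_const), ?_,
        Set.univ, isOpen_univ, trivial, ?_⟩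
      · field_simp
        linear_combination -hz
      · intro β _
        have hDb : (bb β)^2 - 4*K2*cc β = 0 := by
          have := hDall β; rw [hD] at this; exact this
        have h2K : 2*K2*(-bb β * (2*K2)⁻¹) + bb β = 0 := by field_simp; ring
        apply mul_left_cancel₀ (show (4:ℂ)*K2 ≠ 0 by simp [hK2ne])
        linear_combination (2*K2*(-bb β * (2*K2)⁻¹) + bb β)*h2K - hDb
    · -- nondegenerate: analytic square-root branch
      set s₀ : ℂ := 2*K2*γ₀ + bb β₀ with hs₀def
      have hs₀sq : s₀^2 = (bb β₀)^2 - 4*K2*cc β₀ := by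
        rw [hs₀def]; linear_combination 4*K2*hγ₀root
      have hs₀D : s₀^2 = D β₀ := by rw [hs₀sq, hD]
      have hDan : AnalyticAt ℂ D β₀ := by
        rw [hD, hbb, hcc]
        apply AnalyticAt.sub
        · exact ((analyticAt_const.mul analyticAt_id).add analyticAt_const).pow 2
        · exact analyticAt_const.mul
            (((analyticAt_const.mul (analyticAt_id.pow 2)).add
              (analyticAt_const.mul analyticAt_id)).add analyticAt_const)
      set σ : ℂ → ℂ := fun β => s₀ * Complex.exp ((1/2:ℂ) * Complex.log (D β * (D β₀)⁻¹))
        with hσ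
      have hone : D β₀ * (D β₀)⁻¹ = 1 := mul_inv_cancel₀ hDne
      refine ⟨fun β => (σ β - bb β) * (2*K2)⁻¹, ?_, ?_, (fun β => D β * (D β₀)⁻¹) ⁻¹' Complex.slitPlane, ?_, ?_, ?_⟩
      · apply AnalyticAt.mul _ analyticAt_const
        apply AnalyticAt.sub
        · rw [hσ]
          apply analyticAt_const.mul
          apply AnalyticAt.cexp
          apply analyticAt_const.mul
          apply AnalyticAt.clog
          · exact hDan.mul analyticAt_const
          · rw [hone]; exact Complex.one_mem_slitPlane
        · exact hbban β₀
      · have hσβ₀ : σ β₀ = s₀ := by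
          rw [hσ]
          simp only [hone, Complex.log_one, mul_zero, Complex.exp_zero, mul_one]
        simp only [hσβ₀]
        rw [hs₀def]
        field_simp; ring
      · exact Complex.isOpen_slitPlane.preimage (hDcont.mul continuous_const)
      · simp only [Set.mem_preimage, hone]
        exact Complex.one_mem_slitPlane
      · intro β hβ
        have hne : D β * (D β₀)⁻¹ ≠ 0 := Complex.slitPlane_ne_zero hβ
        have hexp : (Complex.exp ((1/2:ℂ) * Complex.log (D β * (D β₀)⁻¹)))^2
            = D β * (D β₀)⁻¹ := by
          rw [← Complex.exp_nat_mul]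
          rw [show ((2:ℕ):ℂ) * ((1/2:ℂ) * Complex.log (D β * (D β₀)⁻¹))
                = Complex.log (D β * (D β₀)⁻¹) by push_cast; ring]
          exact Complex.exp_log hne
        have hσsq : (σ β)^2 = (bb β)^2 - 4*K2*cc β := by
          have h1 : (σ β)^2 = s₀^2 * (D β * (D β₀)⁻¹) := by rw [hσ]; rw [mul_pow, hexp]
          rw [h1, hs₀D]
          have : D β₀ * (D β * (D β₀)⁻¹) = D β := by
            field_simp
          rw [this, hD]
        have h2K : 2*K2*((σ β - bb β) * (2*K2)⁻¹) + bb β = σ β := by field_simp; ring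
        rw [← h2K] at hσsq
        apply mul_left_cancel₀ (show (4:ℂ)*K2 ≠ 0 by simp [hK2ne])
        linear_combination hσsq
  -- Step E: move α off the slit using the open mapping theorem
  set αfun : ℂ → ℂ := fun β => (c₁ - A₂*β - A₃*γfun β)/A₁ with hαdef
  have hαan : AnalyticAt ℂ αfun β₀ := by
    rw [hαdef]
    apply AnalyticAt.div
    · exact (analyticAt_const.sub (analyticAt_const.mul analyticAt_id)).sub
        (analyticAt_const.mul hγan)
    · exact analyticAt_const
    · exact hA₁
  rcases hαan.eventually_constant_or_nhds_le_map_nhds with hc | ho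
  · -- eventually constant: contradiction with hG
    exfalso
    set αc : ℂ := αfun β₀ with hαc
    have hev : {β | αfun β = αc} ∩ U ∈ nhds β₀ :=
      Filter.inter_mem hc (hUopen.mem_nhds hmemU)
    obtain ⟨r, hr0, hball⟩ := Metric.mem_nhds_iff.mp hev
    have hmem : ∀ k : ℝ, 2 ≤ k → β₀ + ((r/k : ℝ) : ℂ) ∈ Metric.ball β₀ r := by
      intro k hk
      rw [Metric.mem_ball, dist_eq_norm, add_sub_cancel_left]
      rw [Complex.norm_real, Real.norm_eq_abs, abs_of_pos (by positivity)]
      rw [div_lt_iff₀ (by linarith)]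
      nlinarith
    have hFk : ∀ k : ℝ, 2 ≤ k →
        K2*(c₁ - A₂*(β₀ + ((r/k:ℝ):ℂ)) - A₁*αc)^2
          + A₃*(bb (β₀ + ((r/k:ℝ):ℂ)))*(c₁ - A₂*(β₀ + ((r/k:ℝ):ℂ)) - A₁*αc)
          + A₃^2*(cc (β₀ + ((r/k:ℝ):ℂ))) = 0 := by
      intro k hk
      have hin := hball (hmem k hk)
      have hαk : αfun (β₀ + ((r/k:ℝ):ℂ)) = αc := hin.1
      have hrootk := hroot _ hin.2
      have hgk : A₃*(γfun (β₀ + ((r/k:ℝ):ℂ)))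
          = c₁ - A₂*(β₀ + ((r/k:ℝ):ℂ)) - A₁*αc := by
        rw [← hαk, hαdef]
        field_simp; ring
      linear_combination A₃^2*hrootk
        - (K2*(A₃*(γfun (β₀ + ((r/k:ℝ):ℂ))) + (c₁ - A₂*(β₀ + ((r/k:ℝ):ℂ)) - A₁*αc))
            + A₃*bb (β₀ + ((r/k:ℝ):ℂ)))*hgk
    have hF2 := hFk 2 (by norm_num)
    have hF3 := hFk 3 (by norm_num)
    have hF4 := hFk 4 (by norm_num)
    have hfinal : ((r:ℂ))^2 * (A₁^2*(C₂*A₃^2 + C₃*A₂^2)) = 0 := by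
      simp only [hbb, hcc, hLdef, hK2def] at hF2 hF3 hF4
      push_cast at hF2 hF3 hF4
      linear_combination 24*hF2 - 72*hF3 + 48*hF4
    have hne : ((r:ℂ))^2*(A₁^2*(C₂*A₃^2 + C₃*A₂^2)) ≠ 0 :=
      mul_ne_zero (pow_ne_zero _ (by exact_mod_cast hr0.ne'))
        (mul_ne_zero (pow_ne_zero _ hA₁) hG)
    exact hne hfinal
  · -- open case: pick a good value of α nearby
    have hS : ({β : ℂ | goodc β} ∩ ((fun β => (γfun β).im) ⁻¹' {x : ℝ | x ≠ 0} ∩ U)) ∈ nhds β₀ := by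
      refine Filter.inter_mem (isOpen_goodc.mem_nhds hgood₀)
        (Filter.inter_mem ?_ (hUopen.mem_nhds hmemU))
      have hca : ContinuousAt (fun β => (γfun β).im) β₀ :=
        Complex.continuous_im.continuousAt.comp hγan.continuousAt
      have hne : (γfun β₀).im ≠ 0 := by rw [hγβ₀]; exact hγ₀im
      exact hca.preimage_mem_nhds (isOpen_ne.mem_nhds hne)
    have himg : αfun '' _ ∈ nhds (αfun β₀) := ho (Filter.image_mem_map hS)
    obtain ⟨ρ, hρ0, hρball⟩ := Metric.mem_nhds_iff.mp himg
    obtain ⟨w, hwball, hwgood⟩ := exists_goodc_near (αfun β₀) hρ0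
    obtain ⟨β₁, hβ₁S, hβ₁w⟩ := hρball hwball
    obtain ⟨hg₁, hmem₁⟩ := hβ₁S
    obtain ⟨him₁, hU₁⟩ := hmem₁
    obtain ⟨heq1, heq2⟩ := hsolve β₁ (γfun β₁) (hroot β₁ hU₁)
    refine ⟨αfun β₁, β₁, γfun β₁, ?_, hg₁, ?_, ?_, ?_⟩
    · rw [hβ₁w]; exact hwgood
    · exact fun hcc' => him₁ hcc'.1
    · rw [hαdef]; exact heq1
    · rw [hαdef]; exact heq2


lemma goodc_one_add {α : ℂ} (hα : goodc α) {t : ℝ} (ht0 : 0 < t) (ht1 : t ≤ 1) :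
    1 + α*(t:ℂ) ≠ 0 := by
  intro h0
  apply hα
  have hre := congrArg Complex.re h0
  have him := congrArg Complex.im h0
  simp [Complex.add_re, Complex.add_im, Complex.mul_re, Complex.mul_im] at hre him
  constructor
  · rcases him with him | him
    · exact him
    · exfalso; linarith
  · by_contra hgt
    push_neg at hgt
    have h1 : α.re * t = -1 := by linarith
    nlinarith

set_option maxHeartbeats 3000000 in
/-- Lemma 6.6 of the paper: for continuous `f` nonconstant and `a`
nonvanishing on `[0,1]`, and any `(x₁,x₂) ∈ ℂ²`, there is a continuous nonvanishing
multiplier `h` with `h(0) = h(1) = 1` and `∫₀¹ a(s)(h(s)f(s), h(s)²f(s)²) ds = (x₁,x₂)`. -/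
theorem stmt_8
    (f a : ℝ → ℂ)
    (hf : ContinuousOn f (Icc (0:ℝ) 1))
    (hac : ContinuousOn a (Icc (0:ℝ) 1))
    (ha0 : ∀ s ∈ Icc (0:ℝ) 1, a s ≠ 0)
    (hnc : ∃ s₁ ∈ Icc (0:ℝ) 1, ∃ s₂ ∈ Icc (0:ℝ) 1, f s₁ ≠ f s₂)
    (x₁ x₂ : ℂ) :
    ∃ h : ℝ → ℂ,
      ContinuousOn h (Icc (0:ℝ) 1) ∧
      (∀ s ∈ Icc (0:ℝ) 1, h s ≠ 0) ∧
      h 0 = 1 ∧ h 1 = 1 ∧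
      (∫ s in (0:ℝ)..1,
        (a s * h s * f s, a s * (h s) ^ 2 * (f s) ^ 2)) = (x₁, x₂) := by
  obtain ⟨s₀, hs₀, hfs₀⟩ := exists_interior_ne_zero f hf hnc
  have hs₀I : s₀ ∈ Icc (0:ℝ) 1 := Ioo_subset_Icc_self hs₀
  set F₁ : ℝ → ℂ := fun s => a s * f s with hF₁def
  set F₂ : ℝ → ℂ := fun s => a s * (f s)^2 with hF₂def
  have hF₁c : ContinuousOn F₁ (Icc 0 1) := hac.mul hf
  have hF₂c : ContinuousOn F₂ (Icc 0 1) := hac.mul (hf.pow 2)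
  set w₀ : ℂ := F₁ s₀ with hw₀def
  set w₁ : ℂ := F₂ s₀ with hw₁def
  have hw₀ne : w₀ ≠ 0 := mul_ne_zero (ha0 s₀ hs₀I) hfs₀
  have hw₁ne : w₁ ≠ 0 := mul_ne_zero (ha0 s₀ hs₀I) (pow_ne_zero 2 hfs₀)
  set ε : ℝ := min ‖w₀‖ ‖w₁‖ / 16 with hεdef
  have hε0 : 0 < ε := by
    apply div_pos _ (by norm_num)
    exact lt_min (norm_pos_iff.mpr hw₀ne) (norm_pos_iff.mpr hw₁ne)
  obtain ⟨δ₁, hδ₁0, hδ₁⟩ := Metric.continuousWithinAt_iff.mp (hF₁c s₀ hs₀I) ε hε0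
  obtain ⟨δ₂, hδ₂0, hδ₂⟩ := Metric.continuousWithinAt_iff.mp (hF₂c s₀ hs₀I) ε hε0
  set δ : ℝ := min (min δ₁ δ₂) (min s₀ (1 - s₀)) / 8 with hδdef
  have hδ0 : 0 < δ := by
    apply div_pos _ (by norm_num)
    exact lt_min (lt_min hδ₁0 hδ₂0) (lt_min hs₀.1 (by linarith [hs₀.2]))
  have h8δ₁ : 8*δ ≤ δ₁ := by
    rw [hδdef]; have := min_le_left (min δ₁ δ₂) (min s₀ (1-s₀));
    have := min_le_left δ₁ δ₂; linarith [min_le_left (min δ₁ δ₂) (min s₀ (1-s₀)), min_le_left δ₁ δ₂]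
  have h8δ₂ : 8*δ ≤ δ₂ := by
    linarith [min_le_left (min δ₁ δ₂) (min s₀ (1-s₀)), min_le_right δ₁ δ₂]
  have h8s₀ : 8*δ ≤ s₀ := by
    linarith [min_le_right (min δ₁ δ₂) (min s₀ (1-s₀)), min_le_left s₀ (1-s₀)]
  have h8s₁ : 8*δ ≤ 1 - s₀ := by
    linarith [min_le_right (min δ₁ δ₂) (min s₀ (1-s₀)), min_le_right s₀ (1-s₀)]
  -- closeness on the window
  have hclose : ∀ e : ℝ, |e - s₀| ≤ 3*δ →
      ((∀ s ∈ Icc (0:ℝ) 1, |s - e| ≤ δ → ‖F₁ s - w₀‖ ≤ ε) ∧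
       (∀ s ∈ Icc (0:ℝ) 1, |s - e| ≤ δ → ‖F₂ s - w₁‖ ≤ ε)) := by
    intro e he
    have key : ∀ s, |s - e| ≤ δ → dist s s₀ < δ₁ ∧ dist s s₀ < δ₂ := by
      intro s hse
      have : |s - s₀| ≤ 4*δ := by
        have h3 := abs_sub_le s e s₀
        linarith
      rw [Real.dist_eq]
      constructor <;> linarith
    constructor
    · intro s hsI hse
      have hd := (key s hse).1
      have := hδ₁ hsI hd
      rw [dist_eq_norm] at this
      exact this.le
    · intro s hsI hse
      have hd := (key s hse).2
      have := hδ₂ hsI hd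
      rw [dist_eq_norm] at this
      exact this.le
    -- centers
  set e1 : ℝ := s₀ - 3*δ with he1def
  set e2 : ℝ := s₀ with he2def
  set e3 : ℝ := s₀ + 3*δ with he3def
  have he1w : |e1 - s₀| ≤ 3*δ := by
    rw [he1def, show s₀ - 3*δ - s₀ = -(3*δ) by ring, abs_neg, abs_of_pos (by linarith)]
  have he2w : |e2 - s₀| ≤ 3*δ := by
    rw [he2def, sub_self, abs_zero]; linarith
  have he3w : |e3 - s₀| ≤ 3*δ := by
    rw [he3def, show s₀ + 3*δ - s₀ = 3*δ by ring, abs_of_pos (by linarith)]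
  have hewin : ∀ e : ℝ, |e - s₀| ≤ 3*δ → δ ≤ e ∧ e + δ ≤ 1 := by
    intro e he
    rw [abs_le] at he
    constructor <;> linarith [he.1, he.2]
  -- moments
  set Iv : ℝ := ∫ s in (-δ)..δ, (tri δ 0 s)^1 with hIvdef
  set Jv : ℝ := ∫ s in (-δ)..δ, (tri δ 0 s)^2 with hJvdef
  have hIpos : 0 < Iv := tri_pow_integral_pos 1 one_ne_zero hδ0
  have hJpos : 0 < Jv := tri_pow_integral_pos 2 (by norm_num) hδ0
  have hconsts : ∀ e : ℝ, |e - s₀| ≤ 3*δ →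
      (‖(∫ s in (0:ℝ)..1, F₁ s * (((tri δ e s)^1 : ℝ):ℂ)) - w₀*((Iv:ℝ):ℂ)‖ ≤ ε*Iv ∧
       ‖(∫ s in (0:ℝ)..1, F₂ s * (((tri δ e s)^2 : ℝ):ℂ)) - w₁*((Jv:ℝ):ℂ)‖ ≤ ε*Jv) := by
    intro e he
    obtain ⟨hea, heb⟩ := hewin e he
    obtain ⟨hc1, hc2⟩ := hclose e he
    constructor
    · have h := tri_est F₁ hF₁c w₀ e hδ0 hε0.le hc1 1 one_ne_zero
      rwa [tri_pow_integral 1 one_ne_zero hδ0 hea heb] at h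
    · have h := tri_est F₂ hF₂c w₁ e hδ0 hε0.le hc2 2 (by norm_num)
      rwa [tri_pow_integral 2 (by norm_num) hδ0 hea heb] at h
  have hA1e := (hconsts e1 he1w).1
  have hA2e := (hconsts e2 he2w).1
  have hA3e := (hconsts e3 he3w).1
  have hC1e := (hconsts e1 he1w).2
  have hC2e := (hconsts e2 he2w).2
  have hC3e := (hconsts e3 he3w).2
  set AA1 : ℂ := ∫ s in (0:ℝ)..1, F₁ s * (((tri δ e1 s)^1 : ℝ):ℂ) with hAA1def
  set AA2 : ℂ := ∫ s in (0:ℝ)..1, F₁ s * (((tri δ e2 s)^1 : ℝ):ℂ) with hAA2def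
  set AA3 : ℂ := ∫ s in (0:ℝ)..1, F₁ s * (((tri δ e3 s)^1 : ℝ):ℂ) with hAA3def
  set CC1 : ℂ := ∫ s in (0:ℝ)..1, F₂ s * (((tri δ e1 s)^2 : ℝ):ℂ) with hCC1def
  set CC2 : ℂ := ∫ s in (0:ℝ)..1, F₂ s * (((tri δ e2 s)^2 : ℝ):ℂ) with hCC2def
  set CC3 : ℂ := ∫ s in (0:ℝ)..1, F₂ s * (((tri δ e3 s)^2 : ℝ):ℂ) with hCC3def
  set BB1 : ℂ := ∫ s in (0:ℝ)..1, F₂ s * (((tri δ e1 s)^1 : ℝ):ℂ) with hBB1def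
  set BB2 : ℂ := ∫ s in (0:ℝ)..1, F₂ s * (((tri δ e2 s)^1 : ℝ):ℂ) with hBB2def
  set BB3 : ℂ := ∫ s in (0:ℝ)..1, F₂ s * (((tri δ e3 s)^1 : ℝ):ℂ) with hBB3def
  set p : ℂ := w₀ * ((Iv:ℝ):ℂ) with hpdef
  set q : ℂ := w₁ * ((Jv:ℝ):ℂ) with hqdef
  have hpne : p ≠ 0 := mul_ne_zero hw₀ne (by exact_mod_cast hIpos.ne')
  have hqne : q ≠ 0 := mul_ne_zero hw₁ne (by exact_mod_cast hJpos.ne')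
  have hnormp : ‖p‖ = ‖w₀‖ * Iv := by
    rw [hpdef, norm_mul, Complex.norm_real, Real.norm_eq_abs, abs_of_pos hIpos]
  have hnormq : ‖q‖ = ‖w₁‖ * Jv := by
    rw [hqdef, norm_mul, Complex.norm_real, Real.norm_eq_abs, abs_of_pos hJpos]
  have hεI : ε * Iv ≤ (1/16) * ‖p‖ := by
    rw [hnormp]
    have h1 : ε ≤ ‖w₀‖/16 := by
      rw [hεdef]
      have := min_le_left ‖w₀‖ ‖w₁‖
      linarith
    nlinarith
  have hεJ : ε * Jv ≤ (1/16) * ‖q‖ := by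
    rw [hnormq]
    have h1 : ε ≤ ‖w₁‖/16 := by
      rw [hεdef]
      have := min_le_right ‖w₀‖ ‖w₁‖
      linarith
    nlinarith
  have hA1' : ‖AA1 - p‖ ≤ (1/16)*‖p‖ := le_trans hA1e hεI
  have hA2' : ‖AA2 - p‖ ≤ (1/16)*‖p‖ := le_trans hA2e hεI
  have hA3' : ‖AA3 - p‖ ≤ (1/16)*‖p‖ := le_trans hA3e hεI
  have hC1' : ‖CC1 - q‖ ≤ (1/16)*‖q‖ := le_trans hC1e hεJ
  have hC2' : ‖CC2 - q‖ ≤ (1/16)*‖q‖ := le_trans hC2e hεJ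
  have hC3' : ‖CC3 - q‖ ≤ (1/16)*‖q‖ := le_trans hC3e hεJ
  have hterm : ∀ (x y : ℂ), ‖x - q‖ ≤ (1/16)*‖q‖ → ‖y - p‖ ≤ (1/16)*‖p‖ →
      ‖x*y^2 - q*p^2‖ ≤ (9/16)*‖q*p^2‖ := by
    intro x y hx hy
    have h2 : ‖y^2 - p^2‖ ≤ (3/16)*‖p^2‖ := by
      have := near_mul (k := 1/16) (by norm_num) (by norm_num) hy hy
      rw [← pow_two y, ← pow_two p] at this
      calc ‖y^2 - p^2‖ ≤ 3*(1/16)*‖p^2‖ := this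
      _ = (3/16)*‖p^2‖ := by ring
    have hx' : ‖x - q‖ ≤ (3/16)*‖q‖ := by nlinarith [norm_nonneg q]
    have := near_mul (k := 3/16) (by norm_num) (by norm_num) hx' h2
    calc ‖x*y^2 - q*p^2‖ ≤ 3*(3/16)*‖q*p^2‖ := this
    _ = (9/16)*‖q*p^2‖ := by ring
  have hT : q*p^2 ≠ 0 := mul_ne_zero hqne (pow_ne_zero 2 hpne)
  have hA1ne : AA1 ≠ 0 := near_ne_zero hpne (by norm_num) hA1'
  have hA3ne : AA3 ≠ 0 := near_ne_zero hpne (by norm_num) hA3'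
  have hLne : CC2*AA1^2 + CC1*AA2^2 ≠ 0 :=
    near_sum_ne hT (hterm CC2 AA1 hC2' hA1') (hterm CC1 AA2 hC1' hA2')
  have hKne : CC3*AA1^2 + CC1*AA3^2 ≠ 0 :=
    near_sum_ne hT (hterm CC3 AA1 hC3' hA1') (hterm CC1 AA3 hC1' hA3')
  have hGne : CC2*AA3^2 + CC3*AA2^2 ≠ 0 :=
    near_sum_ne hT (hterm CC2 AA3 hC2' hA3') (hterm CC3 AA2 hC3' hA2')
  obtain ⟨α, β, γ, hgα, hgβ, hgγ, heq1, heq2⟩ :=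
    core AA1 AA2 AA3 BB1 BB2 BB3 CC1 CC2 CC3
      (x₁ - ∫ s in (0:ℝ)..1, F₁ s) (x₂ - ∫ s in (0:ℝ)..1, F₂ s)
      hA1ne hA3ne hLne hKne hGne
    -- build the multiplier
  set T1 : ℝ → ℂ := fun s => ((tri δ e1 s : ℝ) : ℂ) with hT1def
  set T2 : ℝ → ℂ := fun s => ((tri δ e2 s : ℝ) : ℂ) with hT2def
  set T3 : ℝ → ℂ := fun s => ((tri δ e3 s : ℝ) : ℂ) with hT3def
  set hh : ℝ → ℂ := fun s => 1 + α*T1 s + β*T2 s + γ*T3 s with hhdef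
  have hdisj : ∀ (c c' : ℝ), 3*δ ≤ |c - c'| → ∀ s, tri δ c s = 0 ∨ tri δ c' s = 0 := by
    intro c c' hcc s
    by_contra hcon
    push_neg at hcon
    have h1 := tri_support hδ0 hcon.1
    have h2 := tri_support hδ0 hcon.2
    have h3 := abs_sub_le c s c'
    rw [abs_sub_comm c s] at h3
    linarith
  have hd12 : ∀ s, tri δ e1 s = 0 ∨ tri δ e2 s = 0 := by
    apply hdisj
    rw [he1def, show e2 - 3*δ - e2 = -(3*δ) by ring, abs_neg, abs_of_pos (by linarith)]
  have hd13 : ∀ s, tri δ e1 s = 0 ∨ tri δ e3 s = 0 := by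
    apply hdisj
    rw [he1def, he3def, show e2 - 3*δ - (s₀ + 3*δ) = -(6*δ) + (e2 - s₀) by ring]
    rw [he2def, sub_self, add_zero, abs_neg, abs_of_pos (by linarith)]
    linarith
  have hd23 : ∀ s, tri δ e2 s = 0 ∨ tri δ e3 s = 0 := by
    apply hdisj
    rw [he3def, show e2 - (s₀ + 3*δ) = -(3*δ) + (e2 - s₀) by ring]
    rw [he2def, sub_self, add_zero, abs_neg, abs_of_pos (by linarith)]
  have hh0 : ∀ e : ℝ, |e - s₀| ≤ 3*δ → tri δ e 0 = 0 := by
    intro e he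
    obtain ⟨hea, heb⟩ := hewin e he
    apply tri_eq_zero hδ0
    rw [zero_sub, abs_neg, abs_of_pos (by linarith)]
    linarith
  have hh1 : ∀ e : ℝ, |e - s₀| ≤ 3*δ → tri δ e 1 = 0 := by
    intro e he
    obtain ⟨hea, heb⟩ := hewin e he
    apply tri_eq_zero hδ0
    rw [abs_of_pos (by linarith)]
    linarith
  have htriC : ∀ e : ℝ, Continuous fun s => ((tri δ e s : ℝ) : ℂ) :=
    fun e => Complex.continuous_ofReal.comp (tri_continuous δ e)
  have hhcont : Continuous hh := by
    rw [hhdef, hT1def, hT2def, hT3def]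
    exact ((continuous_const.add (continuous_const.mul (htriC e1))).add
      (continuous_const.mul (htriC e2))).add (continuous_const.mul (htriC e3))
  have hint : ∀ (G : ℝ → ℂ), ContinuousOn G (Icc 0 1) → ∀ (e:ℝ) (n:ℕ),
      IntervalIntegrable (fun s => G s * (((tri δ e s)^n:ℝ):ℂ)) volume 0 1 := by
    intro G hG e n
    exact (hG.mul (Complex.continuous_ofReal.comp
      ((tri_continuous δ e).pow n)).continuousOn).intervalIntegrable_of_Icc zero_le_one
  have hF₁i : IntervalIntegrable F₁ volume 0 1 := hF₁c.intervalIntegrable_of_Icc zero_le_one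
  have hF₂i : IntervalIntegrable F₂ volume 0 1 := hF₂c.intervalIntegrable_of_Icc zero_le_one
  have hPc : ContinuousOn (fun s => a s * hh s * f s) (Icc 0 1) :=
    (hac.mul hhcont.continuousOn).mul hf
  have hQc : ContinuousOn (fun s => a s * (hh s)^2 * (f s)^2) (Icc 0 1) :=
    (hac.mul (hhcont.pow 2).continuousOn).mul (hf.pow 2)
  have hPi : IntervalIntegrable (fun s => a s * hh s * f s) volume 0 1 :=
    hPc.intervalIntegrable_of_Icc zero_le_one
  have hQi : IntervalIntegrable (fun s => a s * (hh s)^2 * (f s)^2) volume 0 1 :=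
    hQc.intervalIntegrable_of_Icc zero_le_one
  have hpair : (∫ s in (0:ℝ)..1, (a s * hh s * f s, a s * (hh s)^2 * (f s)^2))
      = ((∫ s in (0:ℝ)..1, a s * hh s * f s),
         (∫ s in (0:ℝ)..1, a s * (hh s)^2 * (f s)^2)) := by
    rw [intervalIntegral.integral_of_le zero_le_one,
      intervalIntegral.integral_of_le zero_le_one,
      intervalIntegral.integral_of_le zero_le_one]
    exact integral_pair hPi.1 hQi.1
  have hval1 : (∫ s in (0:ℝ)..1, a s * hh s * f s) = x₁ := by
    have hid : EqOn (fun s => a s * hh s * f s)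
        (fun s => F₁ s + (α*(F₁ s*(((tri δ e1 s)^1:ℝ):ℂ))
          + (β*(F₁ s*(((tri δ e2 s)^1:ℝ):ℂ)) + γ*(F₁ s*(((tri δ e3 s)^1:ℝ):ℂ)))))
        (uIcc 0 1) := by
      intro s _
      simp only [hhdef, hF₁def, hT1def, hT2def, hT3def]
      push_cast
      ring
    rw [intervalIntegral.integral_congr hid]
    rw [intervalIntegral.integral_add hF₁i (((hint F₁ hF₁c e1 1).const_mul α).add
      (((hint F₁ hF₁c e2 1).const_mul β).add ((hint F₁ hF₁c e3 1).const_mul γ)))]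
    rw [intervalIntegral.integral_add ((hint F₁ hF₁c e1 1).const_mul α)
      (((hint F₁ hF₁c e2 1).const_mul β).add ((hint F₁ hF₁c e3 1).const_mul γ))]
    rw [intervalIntegral.integral_add ((hint F₁ hF₁c e2 1).const_mul β)
      ((hint F₁ hF₁c e3 1).const_mul γ)]
    rw [intervalIntegral.integral_const_mul, intervalIntegral.integral_const_mul,
      intervalIntegral.integral_const_mul]
    linear_combination heq1
  have hcrossC : ∀ (c c' : ℝ), (∀ s, tri δ c s = 0 ∨ tri δ c' s = 0) →
      ∀ s:ℝ, ((tri δ c s:ℝ):ℂ) * ((tri δ c' s:ℝ):ℂ) = 0 := by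
    intro c c' hd s
    rcases hd s with h|h <;> simp [h]
  have hval2 : (∫ s in (0:ℝ)..1, a s * (hh s)^2 * (f s)^2) = x₂ := by
    have hid : EqOn (fun s => a s * (hh s)^2 * (f s)^2)
        (fun s => F₂ s + (2*α*(F₂ s*(((tri δ e1 s)^1:ℝ):ℂ))
          + (2*β*(F₂ s*(((tri δ e2 s)^1:ℝ):ℂ))
          + (2*γ*(F₂ s*(((tri δ e3 s)^1:ℝ):ℂ))
          + (α^2*(F₂ s*(((tri δ e1 s)^2:ℝ):ℂ))
          + (β^2*(F₂ s*(((tri δ e2 s)^2:ℝ):ℂ))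
          + γ^2*(F₂ s*(((tri δ e3 s)^2:ℝ):ℂ))))))))
        (uIcc 0 1) := by
      intro s _
      have h12 := hcrossC e1 e2 hd12 s
      have h13 := hcrossC e1 e3 hd13 s
      have h23 := hcrossC e2 e3 hd23 s
      simp only [hhdef, hF₂def, hT1def, hT2def, hT3def]
      push_cast
      linear_combination (a s * f s^2 * (2*(α*β)))*h12
        + (a s * f s^2 * (2*(α*γ)))*h13 + (a s * f s^2 * (2*(β*γ)))*h23
    rw [intervalIntegral.integral_congr hid]
    rw [intervalIntegral.integral_add hF₂i (((hint F₂ hF₂c e1 1).const_mul (2*α)).add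
      (((hint F₂ hF₂c e2 1).const_mul (2*β)).add (((hint F₂ hF₂c e3 1).const_mul (2*γ)).add
      (((hint F₂ hF₂c e1 2).const_mul (α^2)).add (((hint F₂ hF₂c e2 2).const_mul (β^2)).add
      ((hint F₂ hF₂c e3 2).const_mul (γ^2)))))))]
    rw [intervalIntegral.integral_add ((hint F₂ hF₂c e1 1).const_mul (2*α))
      (((hint F₂ hF₂c e2 1).const_mul (2*β)).add (((hint F₂ hF₂c e3 1).const_mul (2*γ)).add
      (((hint F₂ hF₂c e1 2).const_mul (α^2)).add (((hint F₂ hF₂c e2 2).const_mul (β^2)).add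
      ((hint F₂ hF₂c e3 2).const_mul (γ^2))))))]
    rw [intervalIntegral.integral_add ((hint F₂ hF₂c e2 1).const_mul (2*β))
      (((hint F₂ hF₂c e3 1).const_mul (2*γ)).add
      (((hint F₂ hF₂c e1 2).const_mul (α^2)).add (((hint F₂ hF₂c e2 2).const_mul (β^2)).add
      ((hint F₂ hF₂c e3 2).const_mul (γ^2)))))]
    rw [intervalIntegral.integral_add ((hint F₂ hF₂c e3 1).const_mul (2*γ))
      (((hint F₂ hF₂c e1 2).const_mul (α^2)).add (((hint F₂ hF₂c e2 2).const_mul (β^2)).add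
      ((hint F₂ hF₂c e3 2).const_mul (γ^2))))]
    rw [intervalIntegral.integral_add ((hint F₂ hF₂c e1 2).const_mul (α^2))
      (((hint F₂ hF₂c e2 2).const_mul (β^2)).add ((hint F₂ hF₂c e3 2).const_mul (γ^2)))]
    rw [intervalIntegral.integral_add ((hint F₂ hF₂c e2 2).const_mul (β^2))
      ((hint F₂ hF₂c e3 2).const_mul (γ^2))]
    rw [intervalIntegral.integral_const_mul, intervalIntegral.integral_const_mul,
      intervalIntegral.integral_const_mul, intervalIntegral.integral_const_mul,
      intervalIntegral.integral_const_mul, intervalIntegral.integral_const_mul]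
    linear_combination heq2
  refine ⟨hh, hhcont.continuousOn, ?_, ?_, ?_, ?_⟩
  · -- nonvanishing
    intro s _
    rcases eq_or_ne (tri δ e1 s) 0 with h1 | h1
    · rcases eq_or_ne (tri δ e2 s) 0 with h2 | h2
      · rcases eq_or_ne (tri δ e3 s) 0 with h3 | h3
        · rw [hhdef]
          simp [hT1def, hT2def, hT3def, h1, h2, h3]
        · have hpos := (tri_nonneg δ e3 s).lt_of_ne (Ne.symm h3)
          rw [hhdef]
          simp only [hT1def, hT2def, hT3def, h1, h2, Complex.ofReal_zero, mul_zero, add_zero]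
          have := goodc_one_add hgγ hpos (tri_le_one hδ0 e3 s)
          simpa [add_assoc] using this
      · have h3 : tri δ e3 s = 0 := by
          rcases hd23 s with h|h
          · exact absurd h h2
          · exact h
        have hpos := (tri_nonneg δ e2 s).lt_of_ne (Ne.symm h2)
        rw [hhdef]
        simp only [hT1def, hT2def, hT3def, h1, h3, Complex.ofReal_zero, mul_zero, add_zero]
        have := goodc_one_add hgβ hpos (tri_le_one hδ0 e2 s)
        simpa [add_assoc] using this
    · have h2 : tri δ e2 s = 0 := by
        rcases hd12 s with h|h
        · exact absurd h h1
        · exact h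
      have h3 : tri δ e3 s = 0 := by
        rcases hd13 s with h|h
        · exact absurd h h1
        · exact h
      have hpos := (tri_nonneg δ e1 s).lt_of_ne (Ne.symm h1)
      rw [hhdef]
      simp only [hT1def, hT2def, hT3def, h2, h3, Complex.ofReal_zero, mul_zero, add_zero]
      have := goodc_one_add hgα hpos (tri_le_one hδ0 e1 s)
      simpa [add_assoc] using this
  · rw [hhdef]
    simp [hT1def, hT2def, hT3def, hh0 e1 he1w, hh0 e2 he2w, hh0 e3 he3w]
  · rw [hhdef]
    simp [hT1def, hT2def, hT3def, hh1 e1 he1w, hh1 e2 he2w, hh1 e3 he3w]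
  · rw [hpair, hval1, hval2]
end

section
/- Let f : [0,1] → ℂ be continuous and nonconstant and let a : [0,1] → ℂ \ {0} be continuous. Then there exist an integer N ≥ 1 and points 0 < s₁ < s₂ < ⋯ < s_N < 1 such that the map ℂᴺ → ℂ² given by (y₁, …, y_N) ↦ Σ_{i=1}^N a(sᵢ) (yᵢ f(sᵢ), yᵢ² f(sᵢ)²) is surjective. -/
open Set Filter Topology

lemma quad_aux (a₁ a₂ u v : ℂ) (h1 : a₁ ≠ 0) (h2 : a₂ ≠ 0) (h12 : a₁ + a₂ ≠ 0) :
    ∃ z₁ z₂ : ℂ, a₁ * z₁ + a₂ * z₂ = u ∧ a₁ * z₁ ^ 2 + a₂ * z₂ ^ 2 = v := by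
  obtain ⟨δ, hδ⟩ := IsAlgClosed.exists_pow_nat_eq
    ((-2*u*a₂)^2 - 4*(a₂*(a₁+a₂))*(u^2 - a₁*v)) (n := 2) (by norm_num)
  have hA : a₂*(a₁+a₂) ≠ 0 := mul_ne_zero h2 h12
  obtain ⟨t, htA⟩ : ∃ t : ℂ, 2*(a₂*(a₁+a₂))*t = 2*u*a₂ + δ :=
    ⟨(2*u*a₂ + δ)/(2*(a₂*(a₁+a₂))), by field_simp⟩
  have h4 : (4*(a₂*(a₁+a₂))) ≠ 0 := by
    exact mul_ne_zero (by norm_num) hA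
  have key : (a₂*(a₁+a₂)) * t^2 + (-2*u*a₂) * t + (u^2 - a₁*v) = 0 := by
    refine mul_left_cancel₀ h4 ?_
    rw [mul_zero]
    linear_combination (2*(a₂*(a₁+a₂))*t + 2*u*a₂ + δ - 4*u*a₂) * htA + hδ
  refine ⟨(u - a₂*t)/a₁, t, by field_simp; ring, ?_⟩
  field_simp
  linear_combination key

/-- for `f : [0,1] → ℂ` continuous nonconstant and `a : [0,1] → ℂ∖{0}`
continuous, there exist `N ≥ 1` and points `0 < s₁ < ⋯ < s_N < 1` such that the polynomial
map `(y₁,…,y_N) ↦ Σᵢ a(sᵢ)(yᵢ f(sᵢ), yᵢ² f(sᵢ)²)` from `ℂᴺ` to `ℂ²` is surjective. -/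
theorem stmt_11
    (f a : ℝ → ℂ)
    (hf : ContinuousOn f (Icc (0:ℝ) 1))
    (hnc : ∃ s₁ ∈ Icc (0:ℝ) 1, ∃ s₂ ∈ Icc (0:ℝ) 1, f s₁ ≠ f s₂)
    (hac : ContinuousOn a (Icc (0:ℝ) 1))
    (ha0 : ∀ s ∈ Icc (0:ℝ) 1, a s ≠ 0) :
    ∃ N : ℕ, 1 ≤ N ∧ ∃ s : Fin N → ℝ, StrictMono s ∧ (∀ i, s i ∈ Ioo (0:ℝ) 1) ∧
      Function.Surjective (fun y : Fin N → ℂ =>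
        ((∑ i, a (s i) * y i * f (s i),
          ∑ i, a (s i) * (y i) ^ 2 * (f (s i)) ^ 2) : ℂ × ℂ)) := by
  -- find a point in Icc where f ≠ 0
  have hex : ∃ s ∈ Icc (0:ℝ) 1, f s ≠ 0 := by
    obtain ⟨s₁, hs₁, s₂, hs₂, hne⟩ := hnc
    rcases eq_or_ne (f s₁) 0 with h | h
    · exact ⟨s₂, hs₂, fun h2 => hne (by rw [h, h2])⟩
    · exact ⟨s₁, hs₁, h⟩
  obtain ⟨s₀, hs₀, hfs₀⟩ := hex
  -- find an interior point t₀ with f t₀ ≠ 0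
  have hnb : (𝓝[Ioo (0:ℝ) 1] s₀).NeBot := by
    rw [← mem_closure_iff_nhdsWithin_neBot, closure_Ioo (by norm_num : (0:ℝ) ≠ 1)]
    exact hs₀
  have hev : ∀ᶠ x in 𝓝[Ioo (0:ℝ) 1] s₀, f x ≠ 0 :=
    ((hf s₀ hs₀).mono_left (nhdsWithin_mono _ Ioo_subset_Icc_self)).eventually_ne hfs₀
  obtain ⟨t₀, ht₀f, ht₀⟩ := (hev.and (eventually_mem_nhdsWithin)).exists
  -- find a second point t₁ ∈ Ioo t₀ 1 with f t₁ ≠ 0 and a t₁ + a t₀ ≠ 0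
  have ht₀Icc : t₀ ∈ Icc (0:ℝ) 1 := Ioo_subset_Icc_self ht₀
  have hnb2 : (𝓝[Ioo t₀ 1] t₀).NeBot := by
    rw [← mem_closure_iff_nhdsWithin_neBot, closure_Ioo ht₀.2.ne]
    exact ⟨le_refl _, ht₀.2.le⟩
  have hsub : Ioo t₀ 1 ⊆ Icc (0:ℝ) 1 := fun x hx => ⟨ht₀.1.le.trans hx.1.le, hx.2.le⟩
  have hev2 : ∀ᶠ x in 𝓝[Ioo t₀ 1] t₀, f x ≠ 0 ∧ a x + a t₀ ≠ 0 := by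
    have h1 : ∀ᶠ x in 𝓝[Ioo t₀ 1] t₀, f x ≠ 0 :=
      ((hf t₀ ht₀Icc).mono_left (nhdsWithin_mono _ hsub)).eventually_ne ht₀f
    have htend : Filter.Tendsto (fun x => a x + a t₀) (𝓝[Ioo t₀ 1] t₀) (𝓝 (a t₀ + a t₀)) :=
      (((hac t₀ ht₀Icc).mono_left (nhdsWithin_mono _ hsub)).add tendsto_const_nhds)
    have h2 : ∀ᶠ x in 𝓝[Ioo t₀ 1] t₀, a x + a t₀ ≠ 0 := by
      apply htend.eventually_ne
      intro h
      have := ha0 t₀ ht₀Icc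
      have : a t₀ = 0 := by
        have : (2:ℂ) * a t₀ = 0 := by linear_combination h
        simpa using this
      exact ha0 t₀ ht₀Icc this
    exact h1.and h2
  obtain ⟨t₁, ⟨ht₁f, ht₁a⟩, ht₁⟩ := (hev2.and (eventually_mem_nhdsWithin)).exists
  have ht₁Ioo : t₁ ∈ Ioo (0:ℝ) 1 := ⟨ht₀.1.trans ht₁.1, ht₁.2⟩
  have ht₁Icc : t₁ ∈ Icc (0:ℝ) 1 := Ioo_subset_Icc_self ht₁Ioo
  refine ⟨2, by norm_num, ![t₀, t₁], ?_, ?_, ?_⟩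
  · intro i j hij
    fin_cases i <;> fin_cases j <;>
      simp_all [Matrix.cons_val_zero, Matrix.cons_val_one]
  · intro i; fin_cases i <;> simpa using by first | exact ht₀ | exact ht₁Ioo
  · rintro ⟨u, v⟩
    obtain ⟨z₁, z₂, hz1, hz2⟩ := quad_aux (a t₀) (a t₁) u v (ha0 t₀ ht₀Icc) (ha0 t₁ ht₁Icc)
      (by rw [add_comm]; exact ht₁a)
    refine ⟨![z₁ / f t₀, z₂ / f t₁], ?_⟩
    simp only [Fin.sum_univ_two, Matrix.cons_val_zero, Matrix.cons_val_one, Matrix.head_cons,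
      Prod.mk.injEq]
    constructor
    · field_simp
      linear_combination hz1
    · field_simp
      linear_combination hz2
end
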